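/- arXiv:1106.5703 — 4 statements merged into one kernel-verified Lean document; each statement's English description precedes it below -/
import Mathlib

section
/- If 0 < q < 1, E[D_1] = μ < ∞, E[p_1·1_{U_1 ≥ p_1}] < ∞ and E[U_1·1_{U_1 < p_1}] < ∞, then the expected completion time satisfies E[R] = a + (b + μ)·q/(1−q), where a = E[p_1·1_{U_1 ≥ p_1}]/(1−q) and b = E[U_1·1_{U_1 < p_1}]/q. -/
open MeasureTheory ProbabilityTheory Real Set
open scoped ENNReal

namespace Stmt1Aux

variable {Ω : Type*} [mΩ : MeasurableSpace Ω] {P : Measure Ω} [IsProbabilityMeasure P]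

lemma lintegral_prod_blocks {ι κ : Type*} (m : ι → MeasurableSpace Ω)
    (hle : ∀ i, m i ≤ mΩ) (hindep : iIndep m P)
    (t : Finset κ) (s : κ → Set ι) (hdisj : (↑t : Set κ).PairwiseDisjoint s)
    (f : κ → Ω → ℝ≥0∞) (hf : ∀ k ∈ t, Measurable[⨆ i ∈ s k, m i] (f k)) :
    ∫⁻ ω, ∏ k ∈ t, f k ω ∂P = ∏ k ∈ t, ∫⁻ ω, f k ω ∂P := by
  classical
  revert hdisj hf
  induction t using Finset.induction with
  | empty => intro _ _; simp
  | @insert k t' hk ih =>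
    intro hdisj hf
    have hsub : (↑t' : Set κ) ⊆ ↑(insert k t') := by
      exact_mod_cast Finset.coe_subset.2 (Finset.subset_insert k t')
    have hdisj' := hdisj.subset hsub
    have hf' : ∀ k' ∈ t', Measurable[⨆ i ∈ s k', m i] (f k') :=
      fun k' hk' => hf k' (Finset.mem_insert_of_mem hk')
    set Mf : MeasurableSpace Ω := ⨆ i ∈ s k, m i with hMf
    set Mg : MeasurableSpace Ω := ⨆ i ∈ ⋃ k' ∈ (t' : Set κ), s k', m i with hMg
    have hMfle : Mf ≤ mΩ := iSup₂_le fun i _ => hle i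
    have hMgle : Mg ≤ mΩ := iSup₂_le fun i _ => hle i
    have hdisjST : Disjoint (s k) (⋃ k' ∈ (t' : Set κ), s k') := by
      refine Set.disjoint_iUnion₂_right.2 fun k' hk' => ?_
      exact hdisj (Finset.mem_insert_self k t') (hsub hk')
        (fun h => hk (h ▸ hk' : k ∈ t'))
    have hindepMfMg : Indep Mf Mg P :=
      indep_iSup_of_disjoint hle hindep hdisjST
    have hmeas_prod : Measurable[Mg] (fun ω => ∏ k' ∈ t', f k' ω) := by
      refine Finset.measurable_prod t' fun k' hk' => ?_
      refine (hf' k' hk').mono ?_ le_rfl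
      exact biSup_mono fun i hi => Set.mem_biUnion hk' hi
    have hfk : Measurable[Mf] (f k) := hf k (Finset.mem_insert_self k t')
    have key := lintegral_mul_eq_lintegral_mul_lintegral_of_independent_measurableSpace
      hMfle hMgle hindepMfMg hfk hmeas_prod
    simp only [Finset.prod_insert hk]
    calc ∫⁻ ω, f k ω * ∏ k' ∈ t', f k' ω ∂P
        = (∫⁻ ω, f k ω ∂P) * ∫⁻ ω, ∏ k' ∈ t', f k' ω ∂P := key
      _ = (∫⁻ ω, f k ω ∂P) * ∏ k' ∈ t', ∫⁻ ω, f k' ω ∂P := by rw [ih hdisj' hf']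

end Stmt1Aux

/-- (Indices shifted to start at `0`: `U 0` is `U₁`, etc.)
If `0 < q < 1`, `E[D₁] = μ < ∞`, `E[p₁·1_{U₁ ≥ p₁}] < ∞` and `E[U₁·1_{U₁ < p₁}] < ∞`,
then `E[R] = a + (b + μ)·q/(1-q)` where `a = E[p₁·1_{U₁ ≥ p₁}]/(1-q)` and
`b = E[U₁·1_{U₁ < p₁}]/q`. -/
theorem stmt1
    {Ω : Type*} [MeasurableSpace Ω] (P : Measure Ω) [IsProbabilityMeasure P]
    (U D p : ℕ → Ω → ℝ)
    (hUmeas : ∀ k, Measurable (U k)) (hDmeas : ∀ k, Measurable (D k))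
    (hpmeas : ∀ k, Measurable (p k))
    (hUnn : ∀ k ω, 0 ≤ U k ω) (hDnn : ∀ k ω, 0 ≤ D k ω) (hpnn : ∀ k ω, 0 ≤ p k ω)
    (hindep : iIndepFun (m := fun _ : ℕ × Fin 3 => (inferInstance : MeasurableSpace ℝ))
      (fun i : ℕ × Fin 3 => ![U i.1, D i.1, p i.1] i.2) P)
    (hUid : ∀ k, IdentDistrib (U k) (U 0) P P)
    (hDid : ∀ k, IdentDistrib (D k) (D 0) P P)
    (hpid : ∀ k, IdentDistrib (p k) (p 0) P P)
    (A : ℕ → Set Ω)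
    (hA : ∀ n, A n = {ω | (∀ i < n, U i ω < p i ω) ∧ p n ω ≤ U n ω})
    (R : Ω → ℝ≥0∞)
    (hR : ∀ ω, R ω =
      (∑' n, Set.indicator (A n)
        (fun ω => ENNReal.ofReal (p n ω + ∑ k ∈ Finset.range n, (U k ω + D k ω))) ω)
      + Set.indicator (⋃ n, A n)ᶜ (fun _ => (⊤ : ℝ≥0∞)) ω)
    (q : ℝ) (hq : q = (P {ω | U 0 ω < p 0 ω}).toReal)
    (hq0 : 0 < q) (hq1 : q < 1)
    (μ : ℝ) (hDint : Integrable (D 0) P) (hμ : μ = ∫ ω, D 0 ω ∂P)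
    (haint : Integrable ({ω | p 0 ω ≤ U 0 ω}.indicator (p 0)) P)
    (hbint : Integrable ({ω | U 0 ω < p 0 ω}.indicator (U 0)) P)
    (a : ℝ) (ha : a = (∫ ω, {ω | p 0 ω ≤ U 0 ω}.indicator (p 0) ω ∂P) / (1 - q))
    (b : ℝ) (hb : b = (∫ ω, {ω | U 0 ω < p 0 ω}.indicator (U 0) ω ∂P) / q) :
    ∫⁻ ω, R ω ∂P = ENNReal.ofReal (a + (b + μ) * (q / (1 - q))) := by
  classical
  set X : ℕ × Fin 3 → Ω → ℝ := fun i => ![U i.1, D i.1, p i.1] i.2 with hX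
  have hXmeas : ∀ i, Measurable (X i) := by
    rintro ⟨n, j⟩
    fin_cases j
    · exact hUmeas n
    · exact hDmeas n
    · exact hpmeas n
  set m : ℕ × Fin 3 → MeasurableSpace Ω := fun i => MeasurableSpace.comap (X i) inferInstance
    with hm
  have hle : ∀ i, m i ≤ ‹MeasurableSpace Ω› := fun i => (hXmeas i).comap_le
  have hiIndep : iIndep m P := hindep
  have hipair : ∀ k, IndepFun (U k) (p k) P := by
    intro k
    exact hindep.indepFun (i := (k, 0)) (j := (k, 2)) (by simp)
  have hpair : ∀ k, IdentDistrib (fun ω => (U k ω, p k ω)) (fun ω => (U 0 ω, p 0 ω)) P P := by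
    intro k
    refine ⟨((hUmeas k).prodMk (hpmeas k)).aemeasurable,
      ((hUmeas 0).prodMk (hpmeas 0)).aemeasurable, ?_⟩
    rw [(indepFun_iff_map_prod_eq_prod_map_map (hUmeas k).aemeasurable
          (hpmeas k).aemeasurable).1 (hipair k),
        (indepFun_iff_map_prod_eq_prod_map_map (hUmeas 0).aemeasurable
          (hpmeas 0).aemeasurable).1 (hipair 0),
        (hUid k).map_eq, (hpid k).map_eq]
  set sb : ℕ → Set (ℕ × Fin 3) := fun i => {(i, 0), (i, 2)} with hsb
  set E : ℕ → Set Ω := fun i => {ω | U i ω < p i ω} with hE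
  have hEmeas : ∀ i, MeasurableSet (E i) := fun i => measurableSet_lt (hUmeas i) (hpmeas i)
  set χ : ℕ → Ω → ℝ≥0∞ := fun i => (E i).indicator (fun _ => 1) with hχ
  set ψ : ℕ → Ω → ℝ≥0∞ := fun i => (E i)ᶜ.indicator (fun _ => 1) with hψ
  -- block measurability
  have hMU : ∀ i, Measurable[⨆ j ∈ sb i, m j] (U i) := by
    intro i
    have h1 : m (i, 0) ≤ ⨆ j ∈ sb i, m j := le_biSup _ (by simp [hsb])
    exact Measurable.mono (Measurable.of_comap_le le_rfl) h1 le_rfl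
  have hMp : ∀ i, Measurable[⨆ j ∈ sb i, m j] (p i) := by
    intro i
    have h1 : m (i, 2) ≤ ⨆ j ∈ sb i, m j := le_biSup _ (by simp [hsb])
    exact Measurable.mono (Measurable.of_comap_le le_rfl) h1 le_rfl
  have hME : ∀ i, MeasurableSet[⨆ j ∈ sb i, m j] (E i) :=
    fun i => measurableSet_lt (hMU i) (hMp i)
  have hMχ : ∀ i, Measurable[⨆ j ∈ sb i, m j] (χ i) :=
    fun i => measurable_const.indicator (hME i)
  have hMψ : ∀ i, Measurable[⨆ j ∈ sb i, m j] (ψ i) :=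
    fun i => measurable_const.indicator (hME i).compl
  have hMgp : ∀ i, Measurable[⨆ j ∈ sb i, m j] (fun ω => ψ i ω * ENNReal.ofReal (p i ω)) :=
    fun i => (hMψ i).mul (ENNReal.measurable_ofReal.comp (hMp i))
  have hMgU : ∀ i, Measurable[⨆ j ∈ sb i, m j] (fun ω => χ i ω * ENNReal.ofReal (U i ω)) :=
    fun i => (hMχ i).mul (ENNReal.measurable_ofReal.comp (hMU i))
  have hMgD : ∀ k, Measurable[⨆ j ∈ ({((k : ℕ), (1 : Fin 3))} : Set (ℕ × Fin 3)), m j]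
      (fun ω => ENNReal.ofReal (D k ω)) := by
    intro k
    have h1 : m (k, 1) ≤ ⨆ j ∈ ({((k : ℕ), (1 : Fin 3))} : Set (ℕ × Fin 3)), m j :=
      le_biSup _ (by simp)
    exact ENNReal.measurable_ofReal.comp
      (Measurable.mono (Measurable.of_comap_le le_rfl) h1 le_rfl)
  -- lintegral values and transfer
  set qE := P (E 0) with hqEdef
  set rE := P ((E 0)ᶜ) with hrEdef
  have hχval : ∀ k, ∫⁻ ω, χ k ω ∂P = qE := by
    intro k
    have h1 : ∫⁻ ω, χ k ω ∂P = 1 * P (E k) := lintegral_indicator_const (hEmeas k) 1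
    have h2 : P (E k) = P (E 0) := by
      have := (hpair k).measure_mem_eq (s := {y : ℝ × ℝ | y.1 < y.2})
        (measurableSet_lt measurable_fst measurable_snd)
      simpa [hE] using this
    rw [h1, h2, one_mul]
  have hψval : ∀ k, ∫⁻ ω, ψ k ω ∂P = rE := by
    intro k
    have h1 : ∫⁻ ω, ψ k ω ∂P = 1 * P ((E k)ᶜ) := lintegral_indicator_const (hEmeas k).compl 1
    have h2 : P ((E k)ᶜ) = P ((E 0)ᶜ) := by
      have := (hpair k).measure_mem_eq (s := {y : ℝ × ℝ | y.1 < y.2}ᶜ)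
        (measurableSet_lt measurable_fst measurable_snd).compl
      simpa [hE, Set.preimage_compl] using this
    rw [h1, h2, one_mul]
  set αE := ∫⁻ ω, ψ 0 ω * ENNReal.ofReal (p 0 ω) ∂P with hαEdef
  set βE := ∫⁻ ω, χ 0 ω * ENNReal.ofReal (U 0 ω) ∂P with hβEdef
  set δE := ∫⁻ ω, ENNReal.ofReal (D 0 ω) ∂P with hδEdef
  have hpval : ∀ k, ∫⁻ ω, ψ k ω * ENNReal.ofReal (p k ω) ∂P = αE := by
    intro k
    set h3 : ℝ × ℝ → ℝ≥0∞ := fun y => if y.1 < y.2 then 0 else ENNReal.ofReal y.2 with hh3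
    have hmeas3 : Measurable h3 := by
      refine Measurable.ite (measurableSet_lt measurable_fst measurable_snd) measurable_const ?_
      exact ENNReal.measurable_ofReal.comp measurable_snd
    have hid : ∀ j, (fun ω => ψ j ω * ENNReal.ofReal (p j ω))
        = fun ω => h3 (U j ω, p j ω) := by
      intro j
      funext ω
      by_cases hw : U j ω < p j ω
      · simp [hψ, hh3, hw, Set.indicator_of_notMem, hE]
      · simp [hψ, hh3, hw, Set.indicator_of_mem, hE]
    rw [hαEdef, hid k, hid 0]
    exact ((hpair k).comp hmeas3).lintegral_eq
  have hUval : ∀ k, ∫⁻ ω, χ k ω * ENNReal.ofReal (U k ω) ∂P = βE := by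
    intro k
    set h4 : ℝ × ℝ → ℝ≥0∞ := fun y => if y.1 < y.2 then ENNReal.ofReal y.1 else 0 with hh4
    have hmeas4 : Measurable h4 := by
      refine Measurable.ite (measurableSet_lt measurable_fst measurable_snd) ?_ measurable_const
      exact ENNReal.measurable_ofReal.comp measurable_fst
    have hid : ∀ j, (fun ω => χ j ω * ENNReal.ofReal (U j ω))
        = fun ω => h4 (U j ω, p j ω) := by
      intro j
      funext ω
      by_cases hw : U j ω < p j ω
      · simp [hχ, hh4, hw, Set.indicator_of_mem, hE]
      · simp [hχ, hh4, hw, Set.indicator_of_notMem, hE]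
    rw [hβEdef, hid k, hid 0]
    exact ((hpair k).comp hmeas4).lintegral_eq
  have hDval : ∀ k, ∫⁻ ω, ENNReal.ofReal (D k ω) ∂P = δE :=
    fun k => ((hDid k).comp ENNReal.measurable_ofReal).lintegral_eq
  -- disjointness of blocks
  have hsbdisj : ∀ i j : ℕ, i ≠ j → Disjoint (sb i) (sb j) := by
    intro i j hij
    refine Set.disjoint_left.2 ?_
    rintro ⟨x, y⟩ hx hy
    simp only [hsb, Set.mem_insert_iff, Set.mem_singleton_iff, Prod.mk.injEq] at hx hy
    rcases hx with ⟨h1, _⟩ | ⟨h1, _⟩ <;> rcases hy with ⟨h2, _⟩ | ⟨h2, _⟩ <;>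
      exact hij (h1 ▸ h2 ▸ rfl)
  have hDdisj : ∀ (k j : ℕ), Disjoint ({((k : ℕ), (1 : Fin 3))} : Set (ℕ × Fin 3)) (sb j) := by
    intro k j
    refine Set.disjoint_left.2 ?_
    rintro ⟨x, y⟩ hx hy
    simp only [Set.mem_singleton_iff, Prod.mk.injEq] at hx
    simp only [hsb, Set.mem_insert_iff, Set.mem_singleton_iff, Prod.mk.injEq] at hy
    rcases hy with ⟨_, h2⟩ | ⟨_, h2⟩ <;> rw [hx.2] at h2 <;> exact absurd h2 (by decide)
  -- the indicator product
  set F : ℕ → ℕ → Ω → ℝ≥0∞ := fun n i => if i = n then ψ n else χ i with hF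
  have hprodA : ∀ n ω, ∏ i ∈ Finset.range (n + 1), F n i ω
      = (A n).indicator (fun _ => (1 : ℝ≥0∞)) ω := by
    intro n ω
    by_cases hω : ω ∈ A n
    · rw [Set.indicator_of_mem hω]
      rw [hA n] at hω
      refine Finset.prod_eq_one fun i hi => ?_
      rcases eq_or_ne i n with rfl | hne
      · simp only [hF, if_pos rfl]
        have : ω ∈ (E i)ᶜ := by
          simp only [hE, Set.mem_compl_iff, Set.mem_setOf_eq, not_lt]
          exact hω.2
        simp [hψ, Set.indicator_of_mem this]
      · have hilt : i < n := by
          have := Finset.mem_range.1 hi; omega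
        simp only [hF, if_neg hne]
        have : ω ∈ E i := hω.1 i hilt
        simp [hχ, Set.indicator_of_mem this]
    · rw [Set.indicator_of_notMem hω]
      rw [hA n] at hω
      simp only [Set.mem_setOf_eq, not_and_or, not_forall, not_lt] at hω
      rcases hω with ⟨i, hilt, hle'⟩ | hlt
      · refine Finset.prod_eq_zero (Finset.mem_range.2 (by omega : i < n + 1)) ?_
        have hne : i ≠ n := by omega
        have : ω ∉ E i := by simp [hE, not_lt, hle']
        simp [hF, if_neg hne, hχ, Set.indicator_of_notMem this]
      · refine Finset.prod_eq_zero (Finset.self_mem_range_succ n) ?_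
        have : ω ∉ (E n)ᶜ := by simp [hE, hlt]
        simp [hF, hψ, Set.indicator_of_notMem this]
  have hFprodval : ∀ n, ∏ i ∈ Finset.range (n + 1), ∫⁻ ω, F n i ω ∂P = qE ^ n * rE := by
    intro n
    rw [Finset.prod_range_succ]
    simp only [hF, if_pos rfl]
    rw [hψval n, Finset.prod_congr rfl (fun i hi => by
      have hne : i ≠ n := by have := Finset.mem_range.1 hi; omega
      rw [if_neg hne, hχval i]), Finset.prod_const, Finset.card_range]
  have hFmeas : ∀ n, ∀ k' ∈ Finset.range (n + 1), Measurable[⨆ i ∈ sb k', m i] (F n k') := by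
    intro n k' _
    rcases eq_or_ne k' n with rfl | hne
    · simpa only [hF, if_pos rfl] using hMψ k'
    · simpa only [hF, if_neg hne] using hMχ k'
  have hTind : ∀ n, ∫⁻ ω, ∏ i ∈ Finset.range (n + 1), F n i ω ∂P = qE ^ n * rE := by
    intro n
    rw [Stmt1Aux.lintegral_prod_blocks m hle hiIndep (Finset.range (n + 1)) sb
      (fun i _ j _ hij => hsbdisj i j hij) (F n) (hFmeas n)]
    exact hFprodval n
  have hTp : ∀ n, ∫⁻ ω, (∏ i ∈ Finset.range (n + 1), F n i ω) * ENNReal.ofReal (p n ω) ∂P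
      = qE ^ n * αE := by
    intro n
    set f' : ℕ → Ω → ℝ≥0∞ :=
      fun i => if i = n then (fun ω => ψ n ω * ENNReal.ofReal (p n ω)) else χ i with hf'
    have hpt : ∀ ω, (∏ i ∈ Finset.range (n + 1), F n i ω) * ENNReal.ofReal (p n ω)
        = ∏ i ∈ Finset.range (n + 1), f' i ω := by
      intro ω
      rw [Finset.prod_range_succ, Finset.prod_range_succ]
      have hcong : ∏ i ∈ Finset.range n, F n i ω = ∏ i ∈ Finset.range n, f' i ω :=
        Finset.prod_congr rfl fun i hi => by
          have hne : i ≠ n := by have := Finset.mem_range.1 hi; omega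
          simp only [hF, hf', if_neg hne]
      simp only [hF, hf', if_pos rfl]
      rw [hcong]; ring
    rw [lintegral_congr hpt]
    rw [Stmt1Aux.lintegral_prod_blocks m hle hiIndep (Finset.range (n + 1)) sb
      (fun i _ j _ hij => hsbdisj i j hij) f'
      (fun k' _ => by
        rcases eq_or_ne k' n with rfl | hne
        · simpa only [hf', if_pos rfl] using hMgp k'
        · simpa only [hf', if_neg hne] using hMχ k')]
    rw [Finset.prod_range_succ]
    simp only [hf', if_pos rfl]
    rw [hpval n, Finset.prod_congr rfl (fun i hi => by
      have hne : i ≠ n := by have := Finset.mem_range.1 hi; omega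
      rw [if_neg hne, hχval i]), Finset.prod_const, Finset.card_range]
  have hTU : ∀ n k, k < n →
      ∫⁻ ω, (∏ i ∈ Finset.range (n + 1), F n i ω) * ENNReal.ofReal (U k ω) ∂P
      = βE * rE * qE ^ (n - 1) := by
    intro n k hkn
    have hk1 : k ∈ Finset.range (n + 1) := Finset.mem_range.2 (by omega)
    set f' : ℕ → Ω → ℝ≥0∞ :=
      fun i => if i = k then (fun ω => χ k ω * ENNReal.ofReal (U k ω)) else F n i with hf'
    have hpt : ∀ ω, (∏ i ∈ Finset.range (n + 1), F n i ω) * ENNReal.ofReal (U k ω)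
        = ∏ i ∈ Finset.range (n + 1), f' i ω := by
      intro ω
      rw [← Finset.mul_prod_erase _ (fun i => F n i ω) hk1,
        ← Finset.mul_prod_erase _ (fun i => f' i ω) hk1]
      have hcong : ∏ i ∈ (Finset.range (n + 1)).erase k, F n i ω
          = ∏ i ∈ (Finset.range (n + 1)).erase k, f' i ω :=
        Finset.prod_congr rfl fun i hi => by
          have hne : i ≠ k := (Finset.mem_erase.1 hi).1
          simp only [hf', if_neg hne]
      simp only [hf', if_pos rfl, hF, if_neg (show k ≠ n by omega)]
      rw [hcong]; ring
    rw [lintegral_congr hpt]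
    rw [Stmt1Aux.lintegral_prod_blocks m hle hiIndep (Finset.range (n + 1)) sb
      (fun i _ j _ hij => hsbdisj i j hij) f'
      (fun k' hk' => by
        rcases eq_or_ne k' k with rfl | hne
        · simpa only [hf', if_pos rfl] using hMgU k'
        · simp only [hf', if_neg hne]
          exact hFmeas n k' hk')]
    rw [← Finset.mul_prod_erase _ (fun i => ∫⁻ ω, f' i ω ∂P) hk1]
    have hn1 : n ∈ (Finset.range (n + 1)).erase k :=
      Finset.mem_erase.2 ⟨by omega, Finset.self_mem_range_succ n⟩
    rw [← Finset.mul_prod_erase _ (fun i => ∫⁻ ω, f' i ω ∂P) hn1]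
    have hval1 : ∫⁻ ω, f' k ω ∂P = βE := by
      have h : f' k = fun ω => χ k ω * ENNReal.ofReal (U k ω) := by simp [hf']
      rw [h]; exact hUval k
    have hval2 : ∫⁻ ω, f' n ω ∂P = rE := by
      have h : f' n = ψ n := by simp [hf', hF, show n ≠ k by omega]
      rw [h]; exact hψval n
    rw [hval1, hval2, Finset.prod_congr rfl (fun i hi => by
      have hne1 : i ≠ n := (Finset.mem_erase.1 hi).1
      have hne2 : i ≠ k := (Finset.mem_erase.1 (Finset.mem_erase.1 hi).2).1
      have h : f' i = χ i := by simp [hf', hF, hne1, hne2]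
      rw [h, hχval i]), Finset.prod_const]
    have hcard : (((Finset.range (n + 1)).erase k).erase n).card = n - 1 := by
      rw [Finset.card_erase_of_mem hn1, Finset.card_erase_of_mem hk1, Finset.card_range]
      omega
    rw [hcard]; ring
  have hTD : ∀ n k, k < n →
      ∫⁻ ω, (∏ i ∈ Finset.range (n + 1), F n i ω) * ENNReal.ofReal (D k ω) ∂P
      = δE * (qE ^ n * rE) := by
    intro n k hkn
    set s' : ℕ → Set (ℕ × Fin 3) :=
      fun i => if i = n + 1 then {((k : ℕ), (1 : Fin 3))} else sb i with hs'
    set f' : ℕ → Ω → ℝ≥0∞ :=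
      fun i => if i = n + 1 then (fun ω => ENNReal.ofReal (D k ω)) else F n i with hf'
    have hpt : ∀ ω, (∏ i ∈ Finset.range (n + 1), F n i ω) * ENNReal.ofReal (D k ω)
        = ∏ i ∈ Finset.range (n + 2), f' i ω := by
      intro ω
      rw [Finset.prod_range_succ (f := fun i => f' i ω) (n := n + 1)]
      have hcong : ∏ i ∈ Finset.range (n + 1), f' i ω
          = ∏ i ∈ Finset.range (n + 1), F n i ω :=
        Finset.prod_congr rfl fun i hi => by
          have hne : i ≠ n + 1 := by have := Finset.mem_range.1 hi; omega
          simp only [hf', if_neg hne]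
      have h : f' (n + 1) = fun ω => ENNReal.ofReal (D k ω) := by simp [hf']
      rw [hcong, h]
    have hdisj' : (↑(Finset.range (n + 2)) : Set ℕ).PairwiseDisjoint s' := by
      intro i _ j _ hij
      show Disjoint (s' i) (s' j)
      rcases eq_or_ne i (n + 1) with rfl | hi1 <;> rcases eq_or_ne j (n + 1) with rfl | hj1
      · exact absurd rfl hij
      · rw [show s' (n + 1) = {((k : ℕ), (1 : Fin 3))} by simp [hs'],
          show s' j = sb j by simp [hs', hj1]]
        exact hDdisj k j
      · rw [show s' (n + 1) = {((k : ℕ), (1 : Fin 3))} by simp [hs'],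
          show s' i = sb i by simp [hs', hi1]]
        exact (hDdisj k i).symm
      · rw [show s' i = sb i by simp [hs', hi1], show s' j = sb j by simp [hs', hj1]]
        exact hsbdisj i j hij
    rw [lintegral_congr hpt]
    rw [Stmt1Aux.lintegral_prod_blocks m hle hiIndep (Finset.range (n + 2)) s' hdisj' f'
      (fun k' hk' => by
        rcases eq_or_ne k' (n + 1) with rfl | hne
        · rw [show f' (n + 1) = fun ω => ENNReal.ofReal (D k ω) by simp [hf'],
            show s' (n + 1) = {((k : ℕ), (1 : Fin 3))} by simp [hs']]
          exact hMgD k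
        · rw [show f' k' = F n k' by simp [hf', hne], show s' k' = sb k' by simp [hs', hne]]
          exact hFmeas n k' (Finset.mem_range.2 (by
            have := Finset.mem_range.1 hk'; omega)))]
    rw [Finset.prod_range_succ]
    rw [show f' (n + 1) = fun ω => ENNReal.ofReal (D k ω) by simp [hf']]
    rw [hDval k]
    have hcong2 : ∏ i ∈ Finset.range (n + 1), ∫⁻ ω, f' i ω ∂P
        = ∏ i ∈ Finset.range (n + 1), ∫⁻ ω, F n i ω ∂P :=
      Finset.prod_congr rfl fun i hi => by
        have hne : i ≠ n + 1 := by have := Finset.mem_range.1 hi; omega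
        simp only [hf', if_neg hne]
    rw [hcong2, hFprodval n]
    ring
  -- measurability and disjointness of A
  have hAmeas : ∀ n, MeasurableSet (A n) := by
    intro n
    rw [hA n]
    have h1 : {ω | (∀ i < n, U i ω < p i ω) ∧ p n ω ≤ U n ω}
        = (⋂ i ∈ Finset.range n, E i) ∩ (E n)ᶜ := by
      ext ω
      simp only [Set.mem_setOf_eq, Set.mem_inter_iff, Set.mem_iInter, Set.mem_compl_iff,
        Finset.mem_range, hE, not_lt]
    rw [h1]
    exact (MeasurableSet.biInter (Set.to_countable _) fun i _ => hEmeas i).inter (hEmeas n).compl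
  have hPA : ∀ n, P (A n) = qE ^ n * rE := by
    intro n
    have h1 : P (A n) = ∫⁻ ω, (A n).indicator (fun _ => (1 : ℝ≥0∞)) ω ∂P := by
      rw [lintegral_indicator_const (hAmeas n), one_mul]
    rw [h1, lintegral_congr (fun ω => (hprodA n ω).symm), hTind n]
  have hdisjA : Pairwise (Function.onFun Disjoint A) := by
    have key : ∀ i j, i < j → Disjoint (A i) (A j) := by
      intro i j hij
      refine Set.disjoint_left.2 fun {ω} hωi hωj => ?_
      rw [hA i] at hωi
      rw [hA j] at hωj
      exact absurd hωi.2 (not_le.2 (hωj.1 i hij))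
    intro i j hij
    rcases hij.lt_or_gt with h | h
    · exact key i j h
    · exact (key j i h).symm
  -- scalars
  have hqEne : qE ≠ ⊤ := measure_ne_top P _
  have hqEq : ENNReal.ofReal q = qE := by rw [hq]; exact ENNReal.ofReal_toReal hqEne
  have hqElt1 : qE < 1 := by
    rw [← hqEq]
    exact ENNReal.ofReal_lt_one.2 hq1
  have hrE1 : rE = 1 - qE := prob_compl_eq_one_sub (hEmeas 0)
  have hrEq : ENNReal.ofReal (1 - q) = rE := by
    rw [ENNReal.ofReal_sub 1 hq0.le, ENNReal.ofReal_one, hqEq, hrE1]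
  -- the escape event has probability zero
  have hPU : P (⋃ n, A n) = 1 := by
    rw [measure_iUnion hdisjA hAmeas, tsum_congr hPA, ENNReal.tsum_mul_right,
      ENNReal.tsum_geometric, hrE1]
    have h0 : (0 : ℝ≥0∞) < 1 - qE := tsub_pos_of_lt hqElt1
    have hne : (1 : ℝ≥0∞) - qE ≠ ⊤ := (lt_of_le_of_lt tsub_le_self ENNReal.one_lt_top).ne
    exact ENNReal.inv_mul_cancel h0.ne' hne
  have hPUc : P ((⋃ n, A n)ᶜ) = 0 := by
    rw [prob_compl_eq_one_sub (MeasurableSet.iUnion hAmeas), hPU, tsub_self]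
  -- measurability of the summands
  have hGmeas : ∀ n, Measurable ((A n).indicator
      (fun ω => ENNReal.ofReal (p n ω + ∑ k ∈ Finset.range n, (U k ω + D k ω)))) := by
    intro n
    refine Measurable.indicator ?_ (hAmeas n)
    exact ENNReal.measurable_ofReal.comp ((hpmeas n).add
      (Finset.measurable_sum _ fun k _ => (hUmeas k).add (hDmeas k)))
  -- split ∫⁻ R
  have hRsplit : ∫⁻ ω, R ω ∂P = ∑' n, ∫⁻ ω, (A n).indicator
      (fun ω => ENNReal.ofReal (p n ω + ∑ k ∈ Finset.range n, (U k ω + D k ω))) ω ∂P := by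
    rw [lintegral_congr hR,
      lintegral_add_right _ (measurable_const.indicator (MeasurableSet.iUnion hAmeas).compl),
      lintegral_indicator_const (MeasurableSet.iUnion hAmeas).compl, hPUc, mul_zero, add_zero,
      lintegral_tsum fun n => (hGmeas n).aemeasurable]
  have hprodm : ∀ n, Measurable (fun ω => ∏ i ∈ Finset.range (n + 1), F n i ω) := by
    intro n
    refine Finset.measurable_prod _ fun i hi => ?_
    exact (hFmeas n i hi).mono (iSup₂_le fun j _ => hle j) le_rfl
  have hSn : ∀ n, ∫⁻ ω, (A n).indicator
      (fun ω => ENNReal.ofReal (p n ω + ∑ k ∈ Finset.range n, (U k ω + D k ω))) ω ∂P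
      = qE ^ n * αE + (n : ℝ≥0∞) * (βE * rE * qE ^ (n - 1) + δE * (qE ^ n * rE)) := by
    intro n
    have hpt : ∀ ω, (A n).indicator
        (fun ω => ENNReal.ofReal (p n ω + ∑ k ∈ Finset.range n, (U k ω + D k ω))) ω
        = (∏ i ∈ Finset.range (n + 1), F n i ω) * ENNReal.ofReal (p n ω)
          + ∑ k ∈ Finset.range n,
            ((∏ i ∈ Finset.range (n + 1), F n i ω) * ENNReal.ofReal (U k ω)
              + (∏ i ∈ Finset.range (n + 1), F n i ω) * ENNReal.ofReal (D k ω)) := by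
      intro ω
      by_cases hω : ω ∈ A n
      · have hprod1 : ∏ i ∈ Finset.range (n + 1), F n i ω = 1 := by
          rw [hprodA n ω, Set.indicator_of_mem hω]
        rw [Set.indicator_of_mem hω, hprod1]
        simp only [one_mul]
        rw [ENNReal.ofReal_add (hpnn n ω) (Finset.sum_nonneg fun k _ =>
          add_nonneg (hUnn k ω) (hDnn k ω)),
          ENNReal.ofReal_sum_of_nonneg fun k _ => add_nonneg (hUnn k ω) (hDnn k ω)]
        congr 1
        exact Finset.sum_congr rfl fun k _ => ENNReal.ofReal_add (hUnn k ω) (hDnn k ω)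
      · have hprod0 : ∏ i ∈ Finset.range (n + 1), F n i ω = 0 := by
          rw [hprodA n ω, Set.indicator_of_notMem hω]
        rw [Set.indicator_of_notMem hω, hprod0]
        simp
    have hm1 : Measurable (fun ω => (∏ i ∈ Finset.range (n + 1), F n i ω)
        * ENNReal.ofReal (p n ω)) :=
      (hprodm n).mul (ENNReal.measurable_ofReal.comp (hpmeas n))
    have hm2 : ∀ k : ℕ, Measurable (fun ω => (∏ i ∈ Finset.range (n + 1), F n i ω)
        * ENNReal.ofReal (U k ω)) :=
      fun k => (hprodm n).mul (ENNReal.measurable_ofReal.comp (hUmeas k))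
    have hm3 : ∀ k : ℕ, Measurable (fun ω => (∏ i ∈ Finset.range (n + 1), F n i ω)
        * ENNReal.ofReal (D k ω)) :=
      fun k => (hprodm n).mul (ENNReal.measurable_ofReal.comp (hDmeas k))
    rw [lintegral_congr hpt, lintegral_add_left hm1,
      lintegral_finset_sum _ (f := fun k ω => (∏ i ∈ Finset.range (n + 1), F n i ω) * ENNReal.ofReal (U k ω)
        + (∏ i ∈ Finset.range (n + 1), F n i ω) * ENNReal.ofReal (D k ω))
        (fun k _ => (hm2 k).add (hm3 k)), hTp n]
    congr 1
    rw [Finset.sum_congr rfl (fun k hk => by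
      rw [lintegral_add_left (hm2 k),
        hTU n k (Finset.mem_range.1 hk), hTD n k (Finset.mem_range.1 hk)]),
      Finset.sum_const, Finset.card_range, nsmul_eq_mul]
  -- real constants
  set A₀ := ∫ ω, {ω | p 0 ω ≤ U 0 ω}.indicator (p 0) ω ∂P with hA₀
  set B₀ := ∫ ω, {ω | U 0 ω < p 0 ω}.indicator (U 0) ω ∂P with hB₀
  have hA0nn : 0 ≤ A₀ := integral_nonneg fun ω => Set.indicator_nonneg (fun x _ => hpnn 0 x) ω
  have hB0nn : 0 ≤ B₀ := integral_nonneg fun ω => Set.indicator_nonneg (fun x _ => hUnn 0 x) ω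
  have hμnn : 0 ≤ μ := hμ ▸ integral_nonneg fun ω => hDnn 0 ω
  have hbnn : 0 ≤ b := hb ▸ div_nonneg hB0nn hq0.le
  have h1qnn : 0 ≤ 1 - q := by linarith
  have hαval : αE = ENNReal.ofReal A₀ := by
    have h1 : ∀ ω, ψ 0 ω * ENNReal.ofReal (p 0 ω)
        = ENNReal.ofReal ({ω | p 0 ω ≤ U 0 ω}.indicator (p 0) ω) := by
      intro ω
      by_cases hω : p 0 ω ≤ U 0 ω
      · have hmem : ω ∈ (E 0)ᶜ := by
          simp only [hE, Set.mem_compl_iff, Set.mem_setOf_eq, not_lt]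
          exact hω
        rw [show ψ 0 ω = 1 from Set.indicator_of_mem hmem _,
          Set.indicator_of_mem (show ω ∈ {ω | p 0 ω ≤ U 0 ω} from hω), one_mul]
      · have hmem : ω ∉ (E 0)ᶜ :=
          Set.notMem_compl_iff.2 (show ω ∈ E 0 from not_le.1 hω)
        rw [show ψ 0 ω = 0 from Set.indicator_of_notMem hmem _,
          Set.indicator_of_notMem (show ω ∉ {ω | p 0 ω ≤ U 0 ω} from hω), zero_mul,
          ENNReal.ofReal_zero]
    rw [hαEdef, lintegral_congr h1,
      ← ofReal_integral_eq_lintegral_ofReal haint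
        (Filter.Eventually.of_forall fun ω => Set.indicator_nonneg (fun x _ => hpnn 0 x) ω)]
  have hβval : βE = ENNReal.ofReal B₀ := by
    have h1 : ∀ ω, χ 0 ω * ENNReal.ofReal (U 0 ω)
        = ENNReal.ofReal ({ω | U 0 ω < p 0 ω}.indicator (U 0) ω) := by
      intro ω
      by_cases hω : U 0 ω < p 0 ω
      · have hmem : ω ∈ E 0 := hω
        rw [show χ 0 ω = 1 from Set.indicator_of_mem hmem _,
          Set.indicator_of_mem (show ω ∈ {ω | U 0 ω < p 0 ω} from hω), one_mul]
      · have hmem : ω ∉ E 0 := hω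
        rw [show χ 0 ω = 0 from Set.indicator_of_notMem hmem _,
          Set.indicator_of_notMem (show ω ∉ {ω | U 0 ω < p 0 ω} from hω), zero_mul,
          ENNReal.ofReal_zero]
    rw [hβEdef, lintegral_congr h1,
      ← ofReal_integral_eq_lintegral_ofReal hbint
        (Filter.Eventually.of_forall fun ω => Set.indicator_nonneg (fun x _ => hUnn 0 x) ω)]
  have hδval : δE = ENNReal.ofReal μ := by
    rw [hδEdef, hμ]
    exact (ofReal_integral_eq_lintegral_ofReal hDint
      (Filter.Eventually.of_forall fun ω => hDnn 0 ω)).symm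
  set c : ℝ := (b + μ) * (1 - q) with hc
  have hcnn : 0 ≤ c := mul_nonneg (add_nonneg hbnn hμnn) h1qnn
  have hSn' : ∀ n : ℕ, qE ^ n * αE + (n : ℝ≥0∞) * (βE * rE * qE ^ (n - 1) + δE * (qE ^ n * rE))
      = ENNReal.ofReal (A₀ * q ^ n + n * (c * q ^ n)) := by
    intro n
    cases n with
    | zero => simp [hαval]
    | succ nn =>
      have hB0q : B₀ = b * q := by rw [hb]; field_simp
      have e1 : (ENNReal.ofReal q) ^ (nn + 1) = ENNReal.ofReal (q ^ (nn + 1)) :=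
        (ENNReal.ofReal_pow hq0.le _).symm
      have e1' : (ENNReal.ofReal q) ^ nn = ENNReal.ofReal (q ^ nn) :=
        (ENNReal.ofReal_pow hq0.le _).symm
      rw [hαval, hβval, hδval, ← hqEq, ← hrEq, show nn + 1 - 1 = nn from rfl, e1, e1',
        ← ENNReal.ofReal_mul (pow_nonneg hq0.le (nn + 1)),
        ← ENNReal.ofReal_mul hB0nn, ← ENNReal.ofReal_mul (mul_nonneg hB0nn h1qnn),
        ← ENNReal.ofReal_mul (pow_nonneg hq0.le (nn + 1)), ← ENNReal.ofReal_mul hμnn,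
        ← ENNReal.ofReal_add (mul_nonneg (mul_nonneg hB0nn h1qnn) (pow_nonneg hq0.le nn))
          (mul_nonneg hμnn (mul_nonneg (pow_nonneg hq0.le (nn + 1)) h1qnn)),
        show ((nn + 1 : ℕ) : ℝ≥0∞) = ENNReal.ofReal ((nn + 1 : ℕ) : ℝ) from
          (ENNReal.ofReal_natCast _).symm,
        ← ENNReal.ofReal_mul (Nat.cast_nonneg _),
        ← ENNReal.ofReal_add (mul_nonneg (pow_nonneg hq0.le (nn + 1)) hA0nn)
          (mul_nonneg (Nat.cast_nonneg _)
            (add_nonneg (mul_nonneg (mul_nonneg hB0nn h1qnn) (pow_nonneg hq0.le nn))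
              (mul_nonneg hμnn (mul_nonneg (pow_nonneg hq0.le (nn + 1)) h1qnn))))]
      congr 1
      rw [hc, hB0q]
      push_cast
      ring
  -- summation
  have hqabs : ‖q‖ < 1 := by rw [Real.norm_eq_abs, abs_of_nonneg hq0.le]; exact hq1
  have hs1 : Summable (fun n : ℕ => A₀ * q ^ n) :=
    (summable_geometric_of_lt_one hq0.le hq1).mul_left A₀
  have hs2' : Summable (fun n : ℕ => (n : ℝ) * q ^ n) := by
    have := summable_pow_mul_geometric_of_norm_lt_one 1 hqabs
    simpa using this
  have hs2 : Summable (fun n : ℕ => (n : ℝ) * (c * q ^ n)) :=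
    (hs2'.mul_left c).congr fun n => by ring
  have hwnn : ∀ n : ℕ, 0 ≤ A₀ * q ^ n + n * (c * q ^ n) := fun n =>
    add_nonneg (mul_nonneg hA0nn (pow_nonneg hq0.le n))
      (mul_nonneg (Nat.cast_nonneg n) (mul_nonneg hcnn (pow_nonneg hq0.le n)))
  have hfinal : ∫⁻ ω, R ω ∂P
      = ENNReal.ofReal (∑' n : ℕ, (A₀ * q ^ n + n * (c * q ^ n))) := by
    rw [hRsplit, tsum_congr fun n => (hSn n).trans (hSn' n),
      ← ENNReal.ofReal_tsum_of_nonneg hwnn (hs1.add hs2)]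
  rw [hfinal]
  congr 1
  rw [Summable.tsum_add hs1 hs2, tsum_mul_left, tsum_geometric_of_lt_one hq0.le hq1]
  have h2 : ∑' n : ℕ, (n : ℝ) * (c * q ^ n) = c * (q / (1 - q) ^ 2) := by
    rw [← tsum_coe_mul_geometric_of_norm_lt_one hqabs, ← tsum_mul_left]
    exact tsum_congr fun n => by ring
  have h1q : (1 : ℝ) - q ≠ 0 := by linarith
  rw [h2, hc, ha]
  field_simp
end

section
/- If 0 < q < 1, E[D_1] = μ < ∞, E[p_1·1_{U_1 ≥ p_1}] < ∞ and E[U_1·1_{U_1 < p_1}] < ∞, then for every n ≥ 3, E[p_n·(Σ_{k=1}^{n−1}(U_k + D_k))·1_{U_i < p_i for 1 ≤ i ≤ n−1, U_n ≥ p_n}] = (n−1)·a·(b + μ)·(1−q)·q^{n−1}, where a = E[p_1·1_{U_1 ≥ p_1}]/(1−q) and b = E[U_1·1_{U_1 < p_1}]/q. -/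
open MeasureTheory ProbabilityTheory Real Set
open scoped ENNReal


section Aux

variable {Ω : Type*} [MeasurableSpace Ω] {P : Measure Ω} [IsProbabilityMeasure P]

lemma aux_indep {F : ℕ × Fin 3 → Ω → ℝ} (hFmeas : ∀ i, Measurable (F i))
    (hindep : iIndepFun F P)
    (g : ℕ → (Fin 3 → ℝ) → ℝ) (hg : ∀ i, Measurable (g i))
    {s : Finset ℕ} {c : ℕ} (hc : c ∉ s) :
    IndepFun (fun ω => g c fun m => F (c, m) ω)
      (fun ω => ∏ i ∈ s, g i fun m => F (i, m) ω) P := by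
  classical
  set S : Finset (ℕ × Fin 3) := {c} ×ˢ Finset.univ with hS
  set T : Finset (ℕ × Fin 3) := s ×ˢ Finset.univ with hT
  have hST : Disjoint S T := by
    simp only [hS, hT, Finset.disjoint_left]
    rintro ⟨i, m⟩ hi ht
    simp only [Finset.mem_product, Finset.mem_singleton, Finset.mem_univ, and_true] at hi ht
    exact hc (hi ▸ ht)
  have h := hindep.indepFun_finset S T hST hFmeas
  have hmemS : ∀ m : Fin 3, ((c, m) : ℕ × Fin 3) ∈ S := by
    intro m; simp [hS]
  have hmemT : ∀ (j : {x // x ∈ s}) (m : Fin 3), ((j.1, m) : ℕ × Fin 3) ∈ T := by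
    intro j m; simp [hT, j.2]
  set ψ : ({x // x ∈ S} → ℝ) → ℝ := fun v => g c fun m => v ⟨(c, m), hmemS m⟩ with hψdef
  set χ : ({x // x ∈ T} → ℝ) → ℝ :=
    fun v => ∏ j ∈ s.attach, g j.1 fun m => v ⟨(j.1, m), hmemT j m⟩ with hχdef
  have hψ : Measurable ψ :=
    (hg c).comp (measurable_pi_lambda _ fun m => measurable_pi_apply _)
  have hχ : Measurable χ :=
    Finset.measurable_prod _ fun j _ =>
      (hg j.1).comp (measurable_pi_lambda _ fun m => measurable_pi_apply _)
  have h2 := h.comp hψ hχ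
  have e1 : ψ ∘ (fun ω (i : {x // x ∈ S}) => F i ω) = fun ω => g c fun m => F (c, m) ω := rfl
  have e2 : χ ∘ (fun ω (i : {x // x ∈ T}) => F i ω)
      = fun ω => ∏ i ∈ s, g i fun m => F (i, m) ω := by
    funext ω
    show ∏ j ∈ s.attach, g j.1 (fun m => F (j.1, m) ω) = _
    rw [Finset.prod_attach s (fun i => g i fun m => F (i, m) ω)]
  rw [e1, e2] at h2
  exact h2

lemma aux_meas {F : ℕ × Fin 3 → Ω → ℝ} (hFmeas : ∀ i, Measurable (F i))
    {g : ℕ → (Fin 3 → ℝ) → ℝ} (hg : ∀ i, Measurable (g i)) (i : ℕ) :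
    Measurable (fun ω => g i fun m => F (i, m) ω) :=
  (hg i).comp (measurable_pi_lambda _ fun m => hFmeas _)

lemma aux_integral {F : ℕ × Fin 3 → Ω → ℝ} (hFmeas : ∀ i, Measurable (F i))
    (hindep : iIndepFun F P)
    (g : ℕ → (Fin 3 → ℝ) → ℝ) (hg : ∀ i, Measurable (g i)) (s : Finset ℕ) :
    ∫ ω, ∏ i ∈ s, g i (fun m => F (i, m) ω) ∂P
      = ∏ i ∈ s, ∫ ω, g i (fun m => F (i, m) ω) ∂P := by
  classical
  induction s using Finset.induction_on with
  | empty => simp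
  | @insert c s hc ih =>
    simp only [Finset.prod_insert hc]
    rw [← ih]
    exact (aux_indep hFmeas hindep g hg hc).integral_fun_mul_eq_mul_integral
      (aux_meas hFmeas hg c).aestronglyMeasurable
      (Finset.measurable_prod s fun i _ => aux_meas hFmeas hg i).aestronglyMeasurable

lemma aux_integrable {F : ℕ × Fin 3 → Ω → ℝ} (hFmeas : ∀ i, Measurable (F i))
    (hindep : iIndepFun F P)
    (g : ℕ → (Fin 3 → ℝ) → ℝ) (hg : ∀ i, Measurable (g i)) (s : Finset ℕ)
    (hint : ∀ i ∈ s, Integrable (fun ω => g i fun m => F (i, m) ω) P) :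
    Integrable (fun ω => ∏ i ∈ s, g i fun m => F (i, m) ω) P := by
  classical
  induction s using Finset.induction_on with
  | empty => simp
  | @insert c s hc ih =>
    simp only [Finset.prod_insert hc]
    exact (aux_indep hFmeas hindep g hg hc).integrable_mul
      (hint c (Finset.mem_insert_self c s))
      (ih fun i hi => hint i (Finset.mem_insert_of_mem hi))

end Aux

/-- The factor family used in the proof of `stmt5`. -/
noncomputable def stmt5g (n k i : ℕ) (v : Fin 3 → ℝ) : ℝ :=
  if i = n then (if v 2 ≤ v 0 then v 2 else 0)
  else if i = k then (v 0 + v 1) * (if v 0 < v 2 then 1 else 0)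
  else if v 0 < v 2 then 1 else 0

lemma stmt5g_meas (n k i : ℕ) : Measurable (stmt5g n k i) := by
  have m1 : Measurable (fun v : Fin 3 → ℝ => if v 2 ≤ v 0 then v 2 else 0) :=
    Measurable.ite (measurableSet_le (measurable_pi_apply 2) (measurable_pi_apply 0))
      (measurable_pi_apply 2) measurable_const
  have m2 : Measurable (fun v : Fin 3 → ℝ => if v 0 < v 2 then (1 : ℝ) else 0) :=
    Measurable.ite (measurableSet_lt (measurable_pi_apply 0) (measurable_pi_apply 2))
      measurable_const measurable_const
  have m3 : Measurable (fun v : Fin 3 → ℝ => (v 0 + v 1) * (if v 0 < v 2 then (1 : ℝ) else 0)) :=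
    ((measurable_pi_apply 0).add (measurable_pi_apply 1)).mul m2
  unfold stmt5g
  by_cases h1 : i = n
  · simp only [h1, eq_self_iff_true, if_true]; exact m1
  · simp only [if_neg h1]
    by_cases h2 : i = k
    · simp only [h2, eq_self_iff_true, if_true]; exact m3
    · simp only [if_neg h2]; exact m2

/-- (Indices shifted to start at `0`: the paper's `n ≥ 3` with value
`(n-1)·a·(b+μ)·(1-q)·q^{n-1}` becomes `n ≥ 2` with value `n·a·(b+μ)·(1-q)·qⁿ`.)
If `0 < q < 1`, `E[D₁] = μ < ∞`, `E[p₁·1_{U₁ ≥ p₁}] < ∞`, `E[U₁·1_{U₁ < p₁}] < ∞`,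
then for every `n ≥ 3` (paper indexing),
`E[p_n·(Σ_{k=1}^{n-1}(U_k + D_k))·1_{A_n}] = (n-1)·a·(b+μ)·(1-q)·q^{n-1}`. -/
theorem stmt5
    {Ω : Type*} [MeasurableSpace Ω] (P : Measure Ω) [IsProbabilityMeasure P]
    (U D p : ℕ → Ω → ℝ)
    (hUmeas : ∀ k, Measurable (U k)) (hDmeas : ∀ k, Measurable (D k))
    (hpmeas : ∀ k, Measurable (p k))
    (hUnn : ∀ k ω, 0 ≤ U k ω) (hDnn : ∀ k ω, 0 ≤ D k ω) (hpnn : ∀ k ω, 0 ≤ p k ω)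
    (hindep : iIndepFun
      (fun i : ℕ × Fin 3 => ![U i.1, D i.1, p i.1] i.2) P)
    (hUid : ∀ k, IdentDistrib (U k) (U 0) P P)
    (hDid : ∀ k, IdentDistrib (D k) (D 0) P P)
    (hpid : ∀ k, IdentDistrib (p k) (p 0) P P)
    (A : ℕ → Set Ω)
    (hA : ∀ n, A n = {ω | (∀ i < n, U i ω < p i ω) ∧ p n ω ≤ U n ω})
    (q : ℝ) (hq : q = (P {ω | U 0 ω < p 0 ω}).toReal)
    (hq0 : 0 < q) (hq1 : q < 1)
    (μ : ℝ) (hDint : Integrable (D 0) P) (hμ : μ = ∫ ω, D 0 ω ∂P)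
    (haint : Integrable ({ω | p 0 ω ≤ U 0 ω}.indicator (p 0)) P)
    (hbint : Integrable ({ω | U 0 ω < p 0 ω}.indicator (U 0)) P)
    (a : ℝ) (ha : a = (∫ ω, {ω | p 0 ω ≤ U 0 ω}.indicator (p 0) ω ∂P) / (1 - q))
    (b : ℝ) (hb : b = (∫ ω, {ω | U 0 ω < p 0 ω}.indicator (U 0) ω ∂P) / q) :
    ∀ n, 2 ≤ n →
      ∫ ω, (A n).indicator
          (fun ω => p n ω * ∑ k ∈ Finset.range n, (U k ω + D k ω)) ω ∂P =
        (n : ℝ) * a * (b + μ) * (1 - q) * q ^ n := by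
  classical
  intro n hn
  -- basic facts
  have e0 : ∀ (i : ℕ) (ω : Ω), ![U i, D i, p i] (0 : Fin 3) ω = U i ω := fun _ _ => rfl
  have e1 : ∀ (i : ℕ) (ω : Ω), ![U i, D i, p i] (1 : Fin 3) ω = D i ω := fun _ _ => rfl
  have e2 : ∀ (i : ℕ) (ω : Ω), ![U i, D i, p i] (2 : Fin 3) ω = p i ω := fun _ _ => rfl
  have hFmeas : ∀ j : ℕ × Fin 3,
      Measurable ((fun j : ℕ × Fin 3 => ![U j.1, D j.1, p j.1] j.2) j) := by
    rintro ⟨j, m⟩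
    fin_cases m
    · exact hUmeas j
    · exact hDmeas j
    · exact hpmeas j
  have h1q : (0 : ℝ) < 1 - q := by linarith
  have hq0' : q ≠ 0 := ne_of_gt hq0
  have h1q' : (1 : ℝ) - q ≠ 0 := ne_of_gt h1q
  have hsq : ∀ i, MeasurableSet {ω | U i ω < p i ω} :=
    fun i => measurableSet_lt (hUmeas i) (hpmeas i)
  have hind_meas : ∀ i, Measurable (fun ω => if U i ω < p i ω then (1 : ℝ) else 0) :=
    fun i => Measurable.ite (hsq i) measurable_const measurable_const
  have hind_eq : ∀ i, (fun ω => if U i ω < p i ω then (1 : ℝ) else 0)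
      = Set.indicator {ω | U i ω < p i ω} (1 : Ω → ℝ) := by
    intro i; funext ω
    by_cases h : U i ω < p i ω <;> simp [Set.indicator_apply, Set.mem_setOf_eq, h]
  -- identically distributed pairs
  have hpair_meas : ∀ i : ℕ, AEMeasurable (fun ω => (U i ω, p i ω)) P :=
    fun i => ((hUmeas i).prodMk (hpmeas i)).aemeasurable
  have hUp_indep : ∀ i, IndepFun (U i) (p i) P := by
    intro i
    exact hindep.indepFun (i := (i, 0)) (j := (i, 2)) (by simp)
  have hpair_id : ∀ i, IdentDistrib (fun ω => (U i ω, p i ω)) (fun ω => (U 0 ω, p 0 ω)) P P := by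
    intro i
    refine ⟨hpair_meas i, hpair_meas 0, ?_⟩
    rw [(indepFun_iff_map_prod_eq_prod_map_map (hUmeas i).aemeasurable
        (hpmeas i).aemeasurable).mp (hUp_indep i),
      (indepFun_iff_map_prod_eq_prod_map_map (hUmeas 0).aemeasurable
        (hpmeas 0).aemeasurable).mp (hUp_indep 0),
      (hUid i).map_eq, (hpid i).map_eq]
  have hqP : ∀ i, P {ω | U i ω < p i ω} = P {ω | U 0 ω < p 0 ω} := by
    intro i
    have hms : MeasurableSet {x : ℝ × ℝ | x.1 < x.2} :=
      measurableSet_lt measurable_fst measurable_snd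
    have h1 : {ω | U i ω < p i ω} = (fun ω => (U i ω, p i ω)) ⁻¹' {x : ℝ × ℝ | x.1 < x.2} := rfl
    have h0 : {ω | U 0 ω < p 0 ω} = (fun ω => (U 0 ω, p 0 ω)) ⁻¹' {x : ℝ × ℝ | x.1 < x.2} := rfl
    rw [h1, h0, ← Measure.map_apply_of_aemeasurable (hpair_meas i) hms,
      ← Measure.map_apply_of_aemeasurable (hpair_meas 0) hms, (hpair_id i).map_eq]
  -- the three per-index integrals
  have hIq_int : ∀ i, Integrable (fun ω => if U i ω < p i ω then (1 : ℝ) else 0) P := by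
    intro i; rw [hind_eq i]; exact (integrable_const 1).indicator (hsq i)
  have hIq : ∀ i, ∫ ω, (if U i ω < p i ω then (1 : ℝ) else 0) ∂P = q := by
    intro i
    rw [hind_eq i, integral_indicator_one (hsq i), measureReal_def, hqP i, hq]
  -- factor at index n
  have hfa : Measurable (fun x : ℝ × ℝ => if x.2 ≤ x.1 then x.2 else 0) :=
    Measurable.ite (measurableSet_le measurable_snd measurable_fst)
      measurable_snd measurable_const
  have hida : ∀ i, IdentDistrib (fun ω => if p i ω ≤ U i ω then p i ω else 0)
      (fun ω => if p 0 ω ≤ U 0 ω then p 0 ω else 0) P P :=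
    fun i => (hpair_id i).comp hfa
  have haeq : {ω | p 0 ω ≤ U 0 ω}.indicator (p 0)
      = fun ω => if p 0 ω ≤ U 0 ω then p 0 ω else 0 := by
    funext ω
    by_cases h : p 0 ω ≤ U 0 ω <;> simp [Set.indicator_apply, Set.mem_setOf_eq, h]
  have hIa_int : ∀ i, Integrable (fun ω => if p i ω ≤ U i ω then p i ω else 0) P :=
    fun i => (hida i).integrable_iff.mpr (haeq ▸ haint)
  have hIa : ∀ i, ∫ ω, (if p i ω ≤ U i ω then p i ω else 0) ∂P = (1 - q) * a := by
    intro i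
    rw [(hida i).integral_eq, ← haeq, ha]
    field_simp
  -- factor at index k : U part
  have hfb : Measurable (fun x : ℝ × ℝ => x.1 * (if x.1 < x.2 then (1 : ℝ) else 0)) :=
    measurable_fst.mul (Measurable.ite (measurableSet_lt measurable_fst measurable_snd)
      measurable_const measurable_const)
  have hidb : ∀ i, IdentDistrib (fun ω => U i ω * (if U i ω < p i ω then (1 : ℝ) else 0))
      (fun ω => U 0 ω * (if U 0 ω < p 0 ω then (1 : ℝ) else 0)) P P :=
    fun i => (hpair_id i).comp hfb
  have hbeq : {ω | U 0 ω < p 0 ω}.indicator (U 0)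
      = fun ω => U 0 ω * (if U 0 ω < p 0 ω then (1 : ℝ) else 0) := by
    funext ω
    by_cases h : U 0 ω < p 0 ω <;> simp [Set.indicator_apply, Set.mem_setOf_eq, h]
  have hUind_int : ∀ i, Integrable
      (fun ω => U i ω * (if U i ω < p i ω then (1 : ℝ) else 0)) P :=
    fun i => (hidb i).integrable_iff.mpr (hbeq ▸ hbint)
  have hUind_val : ∀ i, ∫ ω, U i ω * (if U i ω < p i ω then (1 : ℝ) else 0) ∂P = q * b := by
    intro i
    rw [(hidb i).integral_eq, ← hbeq, hb]
    field_simp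
  -- factor at index k : D part
  have hfind : Measurable (fun x : ℝ × ℝ => if x.1 < x.2 then (1 : ℝ) else 0) :=
    Measurable.ite (measurableSet_lt measurable_fst measurable_snd)
      measurable_const measurable_const
  have hDpair : ∀ i, IndepFun (fun ω => (U i ω, p i ω)) (D i) P := by
    intro i
    exact hindep.indepFun_prodMk hFmeas (i, 0) (i, 2) (i, 1) (by simp) (by simp)
  have hDind : ∀ i, IndepFun (D i) (fun ω => if U i ω < p i ω then (1 : ℝ) else 0) P :=
    fun i => ((hDpair i).comp hfind measurable_id).symm
  have hDint' : ∀ i, Integrable (D i) P := fun i => (hDid i).integrable_iff.mpr hDint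
  have hDind_int : ∀ i, Integrable
      (fun ω => D i ω * (if U i ω < p i ω then (1 : ℝ) else 0)) P :=
    fun i => (hDind i).integrable_mul (hDint' i) (hIq_int i)
  have hDind_val : ∀ i, ∫ ω, D i ω * (if U i ω < p i ω then (1 : ℝ) else 0) ∂P = μ * q := by
    intro i
    rw [(hDind i).integral_fun_mul_eq_mul_integral (hDmeas i).aestronglyMeasurable
      (hind_meas i).aestronglyMeasurable, (hDid i).integral_eq, hIq i, ← hμ]
  -- factor at index k combined
  have hsplit : ∀ i, (fun ω => (U i ω + D i ω) * (if U i ω < p i ω then (1 : ℝ) else 0))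
      = fun ω => U i ω * (if U i ω < p i ω then (1 : ℝ) else 0)
        + D i ω * (if U i ω < p i ω then (1 : ℝ) else 0) := by
    intro i; funext ω; ring
  have hIk_int : ∀ i, Integrable
      (fun ω => (U i ω + D i ω) * (if U i ω < p i ω then (1 : ℝ) else 0)) P := by
    intro i; rw [hsplit i]; exact (hUind_int i).add (hDind_int i)
  have hIk : ∀ i, ∫ ω, (U i ω + D i ω) * (if U i ω < p i ω then (1 : ℝ) else 0) ∂P
      = q * (b + μ) := by
    intro i
    rw [hsplit i, integral_add (hUind_int i) (hDind_int i), hUind_val i, hDind_val i]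
    ring
  -- integrability and values of all factors
  have hint_all : ∀ k i, Integrable
      (fun ω => stmt5g n k i (fun m => ![U i, D i, p i] m ω)) P := by
    intro k i
    by_cases hin : i = n
    · subst hin
      simpa only [stmt5g, eq_self_iff_true, if_true, e0, e2] using hIa_int i
    · by_cases hik : i = k
      · subst hik
        simpa only [stmt5g, if_neg hin, eq_self_iff_true, if_true, e0, e1, e2] using hIk_int i
      · simpa only [stmt5g, if_neg hin, if_neg hik, e0, e2] using hIq_int i
  have hval : ∀ k i, ∫ ω, stmt5g n k i (fun m => ![U i, D i, p i] m ω) ∂P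
      = (if i = n then (1 - q) * a else if i = k then q * (b + μ) else q) := by
    intro k i
    by_cases hin : i = n
    · subst hin
      simpa only [stmt5g, eq_self_iff_true, if_true, e0, e2] using hIa i
    · by_cases hik : i = k
      · subst hik
        simpa only [stmt5g, if_neg hin, eq_self_iff_true, if_true, e0, e1, e2] using hIk i
      · simpa only [stmt5g, if_neg hin, if_neg hik, e0, e2] using hIq i
  -- the pointwise identity
  have key : ∀ ω, (A n).indicator
      (fun ω => p n ω * ∑ k ∈ Finset.range n, (U k ω + D k ω)) ω
      = ∑ k ∈ Finset.range n, ∏ i ∈ Finset.range (n + 1),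
          stmt5g n k i (fun m => ![U i, D i, p i] m ω) := by
    intro ω
    by_cases hω : ω ∈ A n
    · rw [Set.indicator_of_mem hω]
      rw [hA n] at hω
      obtain ⟨h1, h2⟩ := hω
      have hterm : ∀ k ∈ Finset.range n, ∏ i ∈ Finset.range (n + 1),
          stmt5g n k i (fun m => ![U i, D i, p i] m ω) = (U k ω + D k ω) * p n ω := by
        intro k hk
        rw [Finset.prod_range_succ]
        have hgn : stmt5g n k n (fun m => ![U n, D n, p n] m ω) = p n ω := by
          simp only [stmt5g, eq_self_iff_true, if_true, e0, e2]
          exact if_pos h2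
        have hprod : ∏ i ∈ Finset.range n,
            stmt5g n k i (fun m => ![U i, D i, p i] m ω) = U k ω + D k ω := by
          rw [Finset.prod_eq_single_of_mem k hk]
          · have hkn : k ≠ n := (Finset.mem_range.mp hk).ne
            simp only [stmt5g, if_neg hkn, eq_self_iff_true, if_true, e0, e1, e2]
            rw [if_pos (h1 k (Finset.mem_range.mp hk)), mul_one]
          · intro i hi hik
            have hin : i ≠ n := (Finset.mem_range.mp hi).ne
            simp only [stmt5g, if_neg hin, if_neg hik, e0, e2]
            exact if_pos (h1 i (Finset.mem_range.mp hi))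
        rw [hgn, hprod]
      rw [Finset.sum_congr rfl hterm, ← Finset.sum_mul, mul_comm]
    · rw [Set.indicator_of_notMem hω]
      symm
      apply Finset.sum_eq_zero
      intro k hk
      rw [hA n] at hω
      simp only [Set.mem_setOf_eq, not_and, not_le] at hω
      by_cases hall : ∀ i < n, U i ω < p i ω
      · have h2 := hω hall
        apply Finset.prod_eq_zero (Finset.self_mem_range_succ n)
        simp only [stmt5g, eq_self_iff_true, if_true, e0, e2]
        exact if_neg (not_le.mpr h2)
      · push_neg at hall
        obtain ⟨i, hi, hip⟩ := hall
        apply Finset.prod_eq_zero (Finset.mem_range.mpr (Nat.lt_succ_of_lt hi))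
        have hin : i ≠ n := hi.ne
        by_cases hik : i = k
        · subst hik
          simp only [stmt5g, if_neg hin, eq_self_iff_true, if_true, e0, e1, e2]
          rw [if_neg (not_lt.mpr hip), mul_zero]
        · simp only [stmt5g, if_neg hin, if_neg hik, e0, e2]
          exact if_neg (not_lt.mpr hip)
  -- the numeric product
  have hnum : ∀ k ∈ Finset.range n, (∏ i ∈ Finset.range (n + 1),
      (if i = n then (1 - q) * a else if i = k then q * (b + μ) else q))
      = q ^ n * (b + μ) * ((1 - q) * a) := by
    intro k hk
    rw [Finset.prod_range_succ, if_pos rfl]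
    have h1 : ∀ i ∈ Finset.range n,
        (if i = n then (1 - q) * a else if i = k then q * (b + μ) else q)
        = q * (if i = k then (b + μ) else 1) := by
      intro i hi
      rw [if_neg (Finset.mem_range.mp hi).ne]
      split_ifs <;> ring
    rw [Finset.prod_congr rfl h1, Finset.prod_mul_distrib, Finset.prod_const,
      Finset.card_range, Finset.prod_ite_eq' (Finset.range n) k (fun _ => b + μ), if_pos hk]
  -- put everything together
  calc ∫ ω, (A n).indicator
        (fun ω => p n ω * ∑ k ∈ Finset.range n, (U k ω + D k ω)) ω ∂P
      = ∫ ω, ∑ k ∈ Finset.range n, ∏ i ∈ Finset.range (n + 1),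
          stmt5g n k i (fun m => ![U i, D i, p i] m ω) ∂P := by
        exact integral_congr_ae (Filter.Eventually.of_forall key)
    _ = ∑ k ∈ Finset.range n, ∫ ω, ∏ i ∈ Finset.range (n + 1),
          stmt5g n k i (fun m => ![U i, D i, p i] m ω) ∂P := by
        exact integral_finset_sum _ (fun k _ =>
          aux_integrable hFmeas hindep (stmt5g n k) (stmt5g_meas n k) _
            (fun i _ => hint_all k i))
    _ = ∑ k ∈ Finset.range n, ∏ i ∈ Finset.range (n + 1),
          ∫ ω, stmt5g n k i (fun m => ![U i, D i, p i] m ω) ∂P := by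
        exact Finset.sum_congr rfl (fun k _ =>
          aux_integral hFmeas hindep (stmt5g n k) (stmt5g_meas n k) _)
    _ = ∑ k ∈ Finset.range n, ∏ i ∈ Finset.range (n + 1),
          (if i = n then (1 - q) * a else if i = k then q * (b + μ) else q) := by
        exact Finset.sum_congr rfl (fun k _ => Finset.prod_congr rfl (fun i _ => hval k i))
    _ = ∑ _k ∈ Finset.range n, (q ^ n * (b + μ) * ((1 - q) * a)) :=
        Finset.sum_congr rfl hnum
    _ = (n : ℝ) * (q ^ n * (b + μ) * ((1 - q) * a)) := by
        rw [Finset.sum_const, Finset.card_range, nsmul_eq_mul]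
    _ = (n : ℝ) * a * (b + μ) * (1 - q) * q ^ n := by ring
end

section
/- If 0 < q < 1, E[U_1·1_{U_1 < p_1}] < ∞ and E[U_1²·1_{U_1 < p_1}] < ∞, then for every n ≥ 3, E[(Σ_{k=1}^{n−1} U_k)²·1_{U_i < p_i for 1 ≤ i ≤ n−1, U_n ≥ p_n}] = (n−1)·d·(1−q)·q^{n−1} + (n−1)(n−2)·b²·(1−q)·q^{n−1}, where b = E[U_1·1_{U_1 < p_1}]/q and d = E[U_1²·1_{U_1 < p_1}]/q. -/
open MeasureTheory ProbabilityTheory Real Set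
open scoped ENNReal

noncomputable def phi6 (n k l i : ℕ) (x : ℝ × ℝ) : ℝ :=
  (if i = k then x.1 else 1) * (if i = l then x.1 else 1) *
    (if i < n then (if x.1 < x.2 then 1 else 0) else (if x.2 ≤ x.1 then 1 else 0))

lemma phi6_meas (n k l i : ℕ) : Measurable (phi6 n k l i) := by
  unfold phi6
  have h1 : Measurable fun x : ℝ × ℝ => (if x.1 < x.2 then (1:ℝ) else 0) :=
    Measurable.ite (measurableSet_lt measurable_fst measurable_snd) measurable_const
      measurable_const
  have h2 : Measurable fun x : ℝ × ℝ => (if x.2 ≤ x.1 then (1:ℝ) else 0) :=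
    Measurable.ite (measurableSet_le measurable_snd measurable_fst) measurable_const
      measurable_const
  refine Measurable.mul (Measurable.mul ?_ ?_) ?_
  · by_cases h : i = k <;> simp [h] <;> exact measurable_fst
  · by_cases h : i = l <;> simp [h] <;> exact measurable_fst
  · by_cases h : i < n <;> simp [h]
    exacts [h1, h2]

lemma aux_indep_s6 {Ω : Type*} [MeasurableSpace Ω] {P : Measure Ω} [IsProbabilityMeasure P]
    {U D p : ℕ → Ω → ℝ}
    (hUmeas : ∀ k, Measurable (U k)) (hDmeas : ∀ k, Measurable (D k))
    (hpmeas : ∀ k, Measurable (p k))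
    (hindep : iIndepFun
      (fun i : ℕ × Fin 3 => ![U i.1, D i.1, p i.1] i.2) P)
    (φ ψ : ℕ → ℝ × ℝ → ℝ) (hφ : ∀ i, Measurable (φ i)) (hψ : ∀ i, Measurable (ψ i))
    (s : Finset ℕ) (m : ℕ) (hm : m ∉ s) :
    IndepFun (fun ω => ∏ i ∈ s, φ i (U i ω, p i ω)) (fun ω => ψ m (U m ω, p m ω)) P := by
  classical
  set f : ℕ × Fin 3 → Ω → ℝ := fun i => ![U i.1, D i.1, p i.1] i.2 with hfdef
  have hfmeas : ∀ i, Measurable (f i) := by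
    rintro ⟨i, j⟩
    fin_cases j
    · exact hUmeas i
    · exact hDmeas i
    · exact hpmeas i
  set S : Finset (ℕ × Fin 3) := s ×ˢ Finset.univ with hS
  set T : Finset (ℕ × Fin 3) := {m} ×ˢ Finset.univ with hT
  have hST : Disjoint S T := by
    simp only [Finset.disjoint_left, hS, hT, Finset.mem_product, Finset.mem_singleton]
    rintro ⟨a, j⟩ ⟨ha, -⟩ ⟨rfl, -⟩
    exact hm ha
  have h := hindep.indepFun_finset S T hST hfmeas
  have hmemS : ∀ i ∈ s, ∀ j : Fin 3, ((i, j) : ℕ × Fin 3) ∈ S := by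
    intro i hi j; simp [hS, hi]
  have hmemT : ∀ j : Fin 3, ((m, j) : ℕ × Fin 3) ∈ T := by
    intro j; simp [hT]
  let g1 : (∀ _ : S, ℝ) → ℝ := fun v =>
    ∏ i ∈ s.attach, φ i.1 (v ⟨(i.1, 0), hmemS i.1 i.2 0⟩, v ⟨(i.1, 2), hmemS i.1 i.2 2⟩)
  let g2 : (∀ _ : T, ℝ) → ℝ := fun v => ψ m (v ⟨(m, 0), hmemT 0⟩, v ⟨(m, 2), hmemT 2⟩)
  have hg1 : Measurable g1 := by
    apply Finset.measurable_prod
    intro i _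
    exact (hφ i.1).comp ((measurable_pi_apply _).prodMk (measurable_pi_apply _))
  have hg2 : Measurable g2 :=
    (hψ m).comp ((measurable_pi_apply _).prodMk (measurable_pi_apply _))
  have h2 := h.comp hg1 hg2
  have e1 : (g1 ∘ fun a (i : S) => f i a) = fun ω => ∏ i ∈ s, φ i (U i ω, p i ω) := by
    funext ω
    simp only [Function.comp_apply, g1]
    rw [← Finset.prod_attach s (fun i => φ i (U i ω, p i ω))]
    rfl
  have e2 : (g2 ∘ fun a (i : T) => f i a) = fun ω => ψ m (U m ω, p m ω) := rfl
  rwa [e1, e2] at h2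

lemma aux_prod {Ω : Type*} [MeasurableSpace Ω] {P : Measure Ω} [IsProbabilityMeasure P]
    {U D p : ℕ → Ω → ℝ}
    (hUmeas : ∀ k, Measurable (U k)) (hDmeas : ∀ k, Measurable (D k))
    (hpmeas : ∀ k, Measurable (p k))
    (hindep : iIndepFun
      (fun i : ℕ × Fin 3 => ![U i.1, D i.1, p i.1] i.2) P)
    (φ : ℕ → ℝ × ℝ → ℝ) (hφ : ∀ i, Measurable (φ i))
    (hint : ∀ i, Integrable (fun ω => φ i (U i ω, p i ω)) P) (s : Finset ℕ) :
    Integrable (fun ω => ∏ i ∈ s, φ i (U i ω, p i ω)) P ∧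
    ∫ ω, ∏ i ∈ s, φ i (U i ω, p i ω) ∂P = ∏ i ∈ s, ∫ ω, φ i (U i ω, p i ω) ∂P := by
  classical
  induction s using Finset.induction with
  | empty => simp
  | insert m s hm ih =>
    have hind := (aux_indep_s6 hUmeas hDmeas hpmeas hindep φ φ hφ hφ s m hm).symm
    have h1 : Integrable (fun ω => φ m (U m ω, p m ω) * ∏ i ∈ s, φ i (U i ω, p i ω)) P :=
      hind.integrable_mul (hint m) ih.1
    have h2 := hind.integral_fun_mul_eq_mul_integral (hint m).aestronglyMeasurable ih.1.aestronglyMeasurable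
    constructor
    · refine h1.congr (Filter.Eventually.of_forall fun ω => ?_)
      simp [Finset.prod_insert hm]
    · calc ∫ ω, ∏ i ∈ insert m s, φ i (U i ω, p i ω) ∂P
          = ∫ ω, φ m (U m ω, p m ω) * ∏ i ∈ s, φ i (U i ω, p i ω) ∂P := by
            congr 1; funext ω; rw [Finset.prod_insert hm]
        _ = (∫ ω, φ m (U m ω, p m ω) ∂P) * ∫ ω, ∏ i ∈ s, φ i (U i ω, p i ω) ∂P := h2
        _ = ∏ i ∈ insert m s, ∫ ω, φ i (U i ω, p i ω) ∂P := by
            rw [Finset.prod_insert hm, ih.2]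

/-- (Indices shifted to start at `0`: the paper's `n ≥ 3` with value
`(n-1)·d·(1-q)·q^{n-1} + (n-1)(n-2)·b²·(1-q)·q^{n-1}` becomes `n ≥ 2` with value
`n·d·(1-q)·qⁿ + n(n-1)·b²·(1-q)·qⁿ`.)
If `0 < q < 1`, `E[U₁·1_{U₁ < p₁}] < ∞` and `E[U₁²·1_{U₁ < p₁}] < ∞`, then for every
`n ≥ 3` (paper indexing), `E[(Σ_{k=1}^{n-1} U_k)²·1_{A_n}]
  = (n-1)·d·(1-q)·q^{n-1} + (n-1)(n-2)·b²·(1-q)·q^{n-1}`. -/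
theorem stmt6
    {Ω : Type*} [MeasurableSpace Ω] (P : Measure Ω) [IsProbabilityMeasure P]
    (U D p : ℕ → Ω → ℝ)
    (hUmeas : ∀ k, Measurable (U k)) (hDmeas : ∀ k, Measurable (D k))
    (hpmeas : ∀ k, Measurable (p k))
    (hUnn : ∀ k ω, 0 ≤ U k ω) (hDnn : ∀ k ω, 0 ≤ D k ω) (hpnn : ∀ k ω, 0 ≤ p k ω)
    (hindep : iIndepFun
      (fun i : ℕ × Fin 3 => ![U i.1, D i.1, p i.1] i.2) P)
    (hUid : ∀ k, IdentDistrib (U k) (U 0) P P)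
    (hDid : ∀ k, IdentDistrib (D k) (D 0) P P)
    (hpid : ∀ k, IdentDistrib (p k) (p 0) P P)
    (A : ℕ → Set Ω)
    (hA : ∀ n, A n = {ω | (∀ i < n, U i ω < p i ω) ∧ p n ω ≤ U n ω})
    (q : ℝ) (hq : q = (P {ω | U 0 ω < p 0 ω}).toReal)
    (hq0 : 0 < q) (hq1 : q < 1)
    (hbint : Integrable ({ω | U 0 ω < p 0 ω}.indicator (U 0)) P)
    (hdint : Integrable ({ω | U 0 ω < p 0 ω}.indicator (fun ω => (U 0 ω) ^ 2)) P)
    (b : ℝ) (hb : b = (∫ ω, {ω | U 0 ω < p 0 ω}.indicator (U 0) ω ∂P) / q)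
    (d : ℝ) (hd : d = (∫ ω, {ω | U 0 ω < p 0 ω}.indicator (fun ω => (U 0 ω) ^ 2) ω ∂P) / q) :
    ∀ n, 2 ≤ n →
      ∫ ω, (A n).indicator (fun ω => (∑ k ∈ Finset.range n, U k ω) ^ 2) ω ∂P =
        (n : ℝ) * d * (1 - q) * q ^ n
          + (n : ℝ) * ((n : ℝ) - 1) * b ^ 2 * (1 - q) * q ^ n := by
  classical
  intro n hn
  set E : Set Ω := {ω | U 0 ω < p 0 ω} with hEdef
  have hE : MeasurableSet E := measurableSet_lt (hUmeas 0) (hpmeas 0)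
  -- identical distribution of the pairs
  have hVid : ∀ i, IdentDistrib (fun ω => (U i ω, p i ω)) (fun ω => (U 0 ω, p 0 ω)) P P := by
    intro i
    have hUp : ∀ j, IndepFun (U j) (p j) P := by
      intro j
      have := hindep.indepFun (i := (j,0)) (j := (j,2)) (by simp)
      simpa using this
    refine ⟨((hUmeas i).prodMk (hpmeas i)).aemeasurable,
      ((hUmeas 0).prodMk (hpmeas 0)).aemeasurable, ?_⟩
    rw [(indepFun_iff_map_prod_eq_prod_map_map (hUmeas i).aemeasurable
          (hpmeas i).aemeasurable).1 (hUp i),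
        (indepFun_iff_map_prod_eq_prod_map_map (hUmeas 0).aemeasurable
          (hpmeas 0).aemeasurable).1 (hUp 0),
        (hUid i).map_eq, (hpid i).map_eq]
  -- transfer of integrability and integrals along the pairs
  have hInt0 : ∀ (g : ℝ × ℝ → ℝ), Measurable g →
      Integrable (fun ω => g (U 0 ω, p 0 ω)) P → ∀ i,
      Integrable (fun ω => g (U i ω, p i ω)) P ∧
        ∫ ω, g (U i ω, p i ω) ∂P = ∫ ω, g (U 0 ω, p 0 ω) ∂P := by
    intro g hg h0 i
    have hid := (hVid i).comp hg
    exact ⟨hid.integrable_iff.2 h0, hid.integral_eq⟩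
  -- base functions
  set χ : ℝ × ℝ → ℝ := fun x => if x.1 < x.2 then 1 else 0 with hχdef
  set τ : ℝ × ℝ → ℝ := fun x => if x.2 ≤ x.1 then 1 else 0 with hτdef
  have hχmeas : Measurable χ :=
    Measurable.ite (measurableSet_lt measurable_fst measurable_snd) measurable_const
      measurable_const
  have hτmeas : Measurable τ :=
    Measurable.ite (measurableSet_le measurable_snd measurable_fst) measurable_const
      measurable_const
  have hχeq : (fun ω => χ (U 0 ω, p 0 ω)) = E.indicator (fun _ => (1:ℝ)) := by
    funext ω; by_cases h : U 0 ω < p 0 ω <;>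
      simp [hχdef, h, Set.indicator_apply, hEdef, Set.mem_setOf_eq]
  have hτeq : (fun ω => τ (U 0 ω, p 0 ω)) = Eᶜ.indicator (fun _ => (1:ℝ)) := by
    funext ω
    by_cases h : U 0 ω < p 0 ω
    · simp [hτdef, Set.indicator_apply, hEdef, Set.mem_setOf_eq, h, not_le.2 h]
    · simp [hτdef, Set.indicator_apply, hEdef, Set.mem_setOf_eq, h, not_lt.1 h]
  have hχint : Integrable (fun ω => χ (U 0 ω, p 0 ω)) P := by
    rw [hχeq]; exact (integrable_const 1).indicator hE
  have hχval : ∫ ω, χ (U 0 ω, p 0 ω) ∂P = q := by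
    rw [hχeq]
    rw [show (E.indicator (fun _ => (1:ℝ))) = E.indicator 1 from rfl, integral_indicator_one hE, measureReal_def, hq]
  have hτint : Integrable (fun ω => τ (U 0 ω, p 0 ω)) P := by
    rw [hτeq]; exact (integrable_const 1).indicator hE.compl
  have hτval : ∫ ω, τ (U 0 ω, p 0 ω) ∂P = 1 - q := by
    rw [hτeq]
    rw [show (Eᶜ.indicator (fun _ => (1:ℝ))) = Eᶜ.indicator 1 from rfl,
      integral_indicator_one hE.compl, measureReal_def, prob_compl_eq_one_sub hE,
      ENNReal.toReal_sub_of_le prob_le_one ENNReal.one_ne_top, ENNReal.toReal_one, hq]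
  -- first moment
  set α : ℝ × ℝ → ℝ := fun x => x.1 * χ x with hαdef
  have hαmeas : Measurable α := measurable_fst.mul hχmeas
  have hαeq : (fun ω => α (U 0 ω, p 0 ω)) = E.indicator (U 0) := by
    funext ω
    by_cases h : U 0 ω < p 0 ω <;>
      simp [hαdef, hχdef, Set.indicator_apply, hEdef, Set.mem_setOf_eq, h]
  have hαint : Integrable (fun ω => α (U 0 ω, p 0 ω)) P := by rw [hαeq]; exact hbint
  have hαval : ∫ ω, α (U 0 ω, p 0 ω) ∂P = b * q := by
    rw [hαeq, hb]; field_simp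
  -- second moment
  set β : ℝ × ℝ → ℝ := fun x => x.1 * x.1 * χ x with hβdef
  have hβmeas : Measurable β := (measurable_fst.mul measurable_fst).mul hχmeas
  have hβeq : (fun ω => β (U 0 ω, p 0 ω)) = E.indicator (fun ω => (U 0 ω) ^ 2) := by
    funext ω
    by_cases h : U 0 ω < p 0 ω <;>
      simp [hβdef, hχdef, Set.indicator_apply, hEdef, Set.mem_setOf_eq, h, pow_two]
  have hβint : Integrable (fun ω => β (U 0 ω, p 0 ω)) P := by rw [hβeq]; exact hdint
  have hβval : ∫ ω, β (U 0 ω, p 0 ω) ∂P = d * q := by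
    rw [hβeq, hd]; field_simp
  -- per-index values of phi6
  set c : ℕ → ℕ → ℕ → ℝ := fun k l i =>
    if i < n then (if i = k then (if i = l then d * q else b * q)
      else if i = l then b * q else q) else 1 - q with hcdef
  have harg : ∀ k l, k < n → l < n → ∀ i,
      Integrable (fun ω => phi6 n k l i (U i ω, p i ω)) P ∧
      ∫ ω, phi6 n k l i (U i ω, p i ω) ∂P = c k l i := by
    intro k l hk hl i
    by_cases hin : i < n
    · by_cases hik : i = k
      · by_cases hil : i = l
        · subst hik; subst hil
          have hphi : phi6 n i i i = β := by
            funext x; simp [phi6, hin, hβdef, hχdef, mul_ite, mul_one, mul_zero]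
          rw [hphi, hcdef]
          have h := hInt0 β hβmeas hβint i
          exact ⟨h.1, by rw [h.2, hβval]; simp [hin]⟩
        · subst hik
          have hphi : phi6 n i l i = α := by
            funext x; simp [phi6, hil, hin, hαdef, hχdef, mul_ite, mul_one, mul_zero]
          rw [hphi, hcdef]
          have h := hInt0 α hαmeas hαint i
          exact ⟨h.1, by rw [h.2, hαval]; simp [hin, hil]⟩
      · by_cases hil : i = l
        · subst hil
          have hphi : phi6 n k i i = α := by
            funext x; simp [phi6, hik, hin, hαdef, hχdef, mul_ite, mul_one, mul_zero]
          rw [hphi, hcdef]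
          have h := hInt0 α hαmeas hαint i
          exact ⟨h.1, by rw [h.2, hαval]; simp [hin, hik]⟩
        · have hphi : phi6 n k l i = χ := by
            funext x; simp [phi6, hik, hil, hin, hχdef]
          rw [hphi, hcdef]
          have h := hInt0 χ hχmeas hχint i
          exact ⟨h.1, by rw [h.2, hχval]; simp [hin, hik, hil]⟩
    · have hik : i ≠ k := by omega
      have hil : i ≠ l := by omega
      have hphi : phi6 n k l i = τ := by
        funext x; simp [phi6, hik, hil, hin, hτdef]
      rw [hphi, hcdef]
      have h := hInt0 τ hτmeas hτint i
      exact ⟨h.1, by rw [h.2, hτval]; simp [hin]⟩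
  -- pointwise expansion of the indicator
  have hpt : ∀ ω, (A n).indicator (fun ω => (∑ k ∈ Finset.range n, U k ω) ^ 2) ω
      = ∑ kl ∈ Finset.range n ×ˢ Finset.range n,
          ∏ i ∈ Finset.range (n+1), phi6 n kl.1 kl.2 i (U i ω, p i ω) := by
    intro ω
    by_cases hω : ω ∈ A n
    · rw [Set.indicator_of_mem hω]
      rw [hA n] at hω
      obtain ⟨h1, h2⟩ := hω
      have hterm : ∀ kl ∈ Finset.range n ×ˢ Finset.range n,
          ∏ i ∈ Finset.range (n+1), phi6 n kl.1 kl.2 i (U i ω, p i ω)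
            = U kl.1 ω * U kl.2 ω := by
        rintro ⟨k, l⟩ hkl
        rw [Finset.mem_product, Finset.mem_range, Finset.mem_range] at hkl
        simp only [phi6]
        rw [Finset.prod_mul_distrib, Finset.prod_mul_distrib]
        have e3 : ∏ i ∈ Finset.range (n+1),
            (if i < n then (if (U i ω, p i ω).1 < (U i ω, p i ω).2 then (1:ℝ) else 0)
              else (if (U i ω, p i ω).2 ≤ (U i ω, p i ω).1 then 1 else 0)) = 1 := by
          apply Finset.prod_eq_one
          intro i hi
          by_cases hin : i < n
          · simp [hin, h1 i hin]
          · have hieq : i = n := by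
              have := Finset.mem_range.1 hi; omega
            subst hieq
            simp [hin, h2]
        have e1 : ∏ i ∈ Finset.range (n+1), (if i = k then (U i ω, p i ω).1 else 1)
            = U k ω := by
          rw [Finset.prod_ite_eq' (Finset.range (n+1)) k (fun i => (U i ω, p i ω).1)]
          simp [Finset.mem_range]; omega
        have e2 : ∏ i ∈ Finset.range (n+1), (if i = l then (U i ω, p i ω).1 else 1)
            = U l ω := by
          rw [Finset.prod_ite_eq' (Finset.range (n+1)) l (fun i => (U i ω, p i ω).1)]
          simp [Finset.mem_range]; omega
        rw [e1, e2, e3, mul_one]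
      rw [Finset.sum_congr rfl hterm]
      rw [show ∑ kl ∈ Finset.range n ×ˢ Finset.range n, U kl.1 ω * U kl.2 ω
          = (∑ k ∈ Finset.range n, U k ω) * (∑ l ∈ Finset.range n, U l ω) by
        rw [Finset.sum_mul_sum, Finset.sum_product], ← pow_two]
    · rw [Set.indicator_of_notMem hω]
      symm
      apply Finset.sum_eq_zero
      rintro ⟨k, l⟩ hkl
      rw [hA n] at hω
      rw [Set.mem_setOf_eq, not_and_or] at hω
      rcases hω with h | h
      · push_neg at h
        obtain ⟨i0, hi0, hge⟩ := h
        apply Finset.prod_eq_zero (Finset.mem_range.2 (by omega : i0 < n + 1))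
        simp [phi6, hi0, not_lt.2 hge]
      · rw [not_le] at h
        apply Finset.prod_eq_zero (Finset.mem_range.2 (by omega : n < n + 1))
        simp [phi6, lt_irrefl, not_le.2 h]
  -- product of the values
  have hprodval : ∀ k l, k < n → l < n →
      ∏ i ∈ Finset.range (n+1), c k l i
        = (1 - q) * (if k = l then (d*q) * q^(n-1)
            else (b*q) * ((b*q) * q^(n-1-1))) := by
    intro k l hk hl
    rw [Finset.prod_range_succ]
    have hcn : c k l n = 1 - q := by simp [hcdef]
    rw [hcn]
    have hcr : ∀ i ∈ Finset.range n, c k l i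
        = (if i = k then (if i = l then d*q else b*q) else if i = l then b*q else q) := by
      intro i hi; simp [hcdef, Finset.mem_range.1 hi]
    rw [Finset.prod_congr rfl hcr]
    by_cases hkl : k = l
    · subst hkl
      rw [if_pos rfl]
      have h4 : ∀ i ∈ Finset.range n,
          (if i = k then (if i = k then d*q else b*q) else if i = k then b*q else q)
            = (if i = k then d*q else q) := by
        intro i _; by_cases h : i = k <;> simp [h]
      rw [Finset.prod_congr rfl h4,
        ← Finset.mul_prod_erase (Finset.range n) _ (Finset.mem_range.2 hk), if_pos rfl]
      have h5 : ∀ i ∈ (Finset.range n).erase k, (if i = k then d*q else q) = q := by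
        intro i hi; rw [if_neg (Finset.ne_of_mem_erase hi)]
      rw [Finset.prod_congr rfl h5, Finset.prod_const,
        Finset.card_erase_of_mem (Finset.mem_range.2 hk), Finset.card_range]
      ring
    · rw [if_neg hkl]
      have hlk : l ≠ k := fun h => hkl h.symm
      rw [← Finset.mul_prod_erase (Finset.range n) _ (Finset.mem_range.2 hk),
        if_pos rfl, if_neg hkl]
      have hlmem : l ∈ (Finset.range n).erase k := Finset.mem_erase.2 ⟨hlk, Finset.mem_range.2 hl⟩
      rw [← Finset.mul_prod_erase _ _ hlmem, if_neg hlk, if_pos rfl]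
      have h6 : ∀ i ∈ ((Finset.range n).erase k).erase l,
          (if i = k then (if i = l then d*q else b*q) else if i = l then b*q else q) = q := by
        intro i hi
        have hik : i ≠ k := Finset.ne_of_mem_erase (Finset.mem_of_mem_erase hi)
        have hil : i ≠ l := Finset.ne_of_mem_erase hi
        rw [if_neg hik, if_neg hil]
      rw [Finset.prod_congr rfl h6, Finset.prod_const,
        Finset.card_erase_of_mem hlmem, Finset.card_erase_of_mem (Finset.mem_range.2 hk),
        Finset.card_range]
      ring
  -- sum over l
  have hsuml : ∀ k, k < n →
      ∑ l ∈ Finset.range n, (1 - q) * (if k = l then (d*q) * q^(n-1)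
          else (b*q) * ((b*q) * q^(n-1-1)))
        = (1-q) * ((d*q)*q^(n-1) + ((n:ℝ)-1) * ((b*q)*((b*q)*q^(n-1-1)))) := by
    intro k hk
    rw [← Finset.mul_sum]
    congr 1
    have h7 : ∀ l, (if k = l then (d*q)*q^(n-1) else (b*q)*((b*q)*q^(n-1-1)))
        = (if k = l then (d*q)*q^(n-1) - (b*q)*((b*q)*q^(n-1-1)) else 0)
            + (b*q)*((b*q)*q^(n-1-1)) := by
      intro l; split_ifs <;> ring
    simp_rw [h7]
    rw [Finset.sum_add_distrib, Finset.sum_const, Finset.sum_ite_eq,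
      if_pos (Finset.mem_range.2 hk), Finset.card_range, nsmul_eq_mul]
    ring
  calc ∫ ω, (A n).indicator (fun ω => (∑ k ∈ Finset.range n, U k ω) ^ 2) ω ∂P
      = ∫ ω, ∑ kl ∈ Finset.range n ×ˢ Finset.range n,
          ∏ i ∈ Finset.range (n+1), phi6 n kl.1 kl.2 i (U i ω, p i ω) ∂P :=
        integral_congr_ae (Filter.Eventually.of_forall hpt)
    _ = ∑ kl ∈ Finset.range n ×ˢ Finset.range n,
          ∫ ω, ∏ i ∈ Finset.range (n+1), phi6 n kl.1 kl.2 i (U i ω, p i ω) ∂P := by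
        refine integral_finset_sum _ (fun kl hkl => ?_)
        rw [Finset.mem_product] at hkl
        exact (aux_prod hUmeas hDmeas hpmeas hindep (phi6 n kl.1 kl.2)
          (fun i => phi6_meas n kl.1 kl.2 i)
          (fun i => (harg kl.1 kl.2 (Finset.mem_range.1 hkl.1)
            (Finset.mem_range.1 hkl.2) i).1) (Finset.range (n+1))).1
    _ = ∑ kl ∈ Finset.range n ×ˢ Finset.range n,
          (1 - q) * (if kl.1 = kl.2 then (d*q) * q^(n-1)
            else (b*q) * ((b*q) * q^(n-1-1))) := by
        refine Finset.sum_congr rfl ?_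
        rintro ⟨k, l⟩ hkl
        rw [Finset.mem_product, Finset.mem_range, Finset.mem_range] at hkl
        rw [(aux_prod hUmeas hDmeas hpmeas hindep (phi6 n k l)
            (fun i => phi6_meas n k l i)
            (fun i => (harg k l hkl.1 hkl.2 i).1) (Finset.range (n+1))).2,
          Finset.prod_congr rfl (fun i _ => (harg k l hkl.1 hkl.2 i).2),
          hprodval k l hkl.1 hkl.2]
    _ = ∑ k ∈ Finset.range n,
          (1-q) * ((d*q)*q^(n-1) + ((n:ℝ)-1) * ((b*q)*((b*q)*q^(n-1-1)))) := by
        rw [Finset.sum_product]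
        exact Finset.sum_congr rfl (fun k hk => hsuml k (Finset.mem_range.1 hk))
    _ = (n:ℝ) * ((1-q) * ((d*q)*q^(n-1) + ((n:ℝ)-1) * ((b*q)*((b*q)*q^(n-1-1))))) := by
        rw [Finset.sum_const, Finset.card_range, nsmul_eq_mul]
    _ = (n : ℝ) * d * (1 - q) * q ^ n
          + (n : ℝ) * ((n : ℝ) - 1) * b ^ 2 * (1 - q) * q ^ n := by
        obtain ⟨m, rfl⟩ : ∃ m, n = m + 2 := ⟨n - 2, by omega⟩
        have e1 : m + 2 - 1 = m + 1 := rfl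
        have e2 : m + 1 - 1 = m := rfl
        rw [e1, e2]
        push_cast
        ring
end

section
/- Suppose each uptime U_k follows the exponential distribution with rate parameter λ > 0, each downtime D_k has finite mean E[D_1] = μ, and each processing time is the constant p_k = t with t > 0. Then the expected completion time satisfies E[R] = (1/λ + μ)·(e^{λt} − 1). -/
open MeasureTheory ProbabilityTheory Real Set
open scoped ENNReal



lemma aux_lintegral_prod {ι Ω : Type*} [MeasurableSpace Ω] {P : Measure Ω}
    [IsProbabilityMeasure P] {Y : ι → Ω → ℝ≥0∞} (hYm : ∀ i, Measurable (Y i))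
    (hY : iIndepFun Y P)
    (s : Finset ι) :
    ∫⁻ ω, ∏ i ∈ s, Y i ω ∂P = ∏ i ∈ s, ∫⁻ ω, Y i ω ∂P := by
  classical
  induction s using Finset.cons_induction with
  | empty => simp
  | cons i s hi ih =>
    rw [Finset.prod_cons, ← ih]
    have hindep : IndepFun (Y i) (∏ j ∈ s, Y j) P :=
      (hY.indepFun_finset_prod_of_notMem hYm hi).symm
    have hindep' : IndepFun (Y i) (fun ω => ∏ j ∈ s, Y j ω) P := by
      have : (∏ j ∈ s, Y j) = fun ω => ∏ j ∈ s, Y j ω := by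
        funext ω; simp [Finset.prod_apply]
      rwa [this] at hindep
    have := lintegral_mul_eq_lintegral_mul_lintegral_of_indepFun'' (μ := P)
      (hYm i).aemeasurable (Finset.measurable_prod s fun j _ => hYm j).aemeasurable hindep'
    rw [← this]
    refine lintegral_congr fun ω => ?_
    simp [Finset.prod_insert hi]

lemma aux_exp_Iic {l t : ℝ} (hl : 0 < l) (ht : 0 ≤ t) :
    expMeasure l (Iic t) = ENNReal.ofReal (1 - Real.exp (-(l * t))) := by
  rw [expMeasure, gammaMeasure, withDensity_apply _ measurableSet_Iic]
  have h := lintegral_exponentialPDF_eq_antiDeriv hl t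
  simp only [exponentialPDF, exponentialPDFReal] at h
  rw [show gammaPDF 1 l = fun x => ENNReal.ofReal (gammaPDFReal 1 l x) from rfl] at *
  rw [h, if_pos ht]

lemma aux_exp_singleton {l t : ℝ} : expMeasure l {t} = 0 := by
  rw [expMeasure, gammaMeasure]
  exact withDensity_absolutelyContinuous _ _ (measure_singleton t)

lemma aux_exp_Iio {l t : ℝ} (hl : 0 < l) (ht : 0 ≤ t) :
    expMeasure l (Iio t) = ENNReal.ofReal (1 - Real.exp (-(l * t))) := by
  rw [← Set.Iic_diff_right, measure_diff_null aux_exp_singleton, aux_exp_Iic hl ht]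

lemma aux_exp_Ici {l t : ℝ} (hl : 0 < l) (ht : 0 ≤ t) :
    expMeasure l (Ici t) = ENNReal.ofReal (Real.exp (-(l * t))) := by
  have : IsProbabilityMeasure (expMeasure l) := isProbabilityMeasure_expMeasure hl
  have h : Ici t = (Iio t)ᶜ := by simp
  rw [h, measure_compl measurableSet_Iio (measure_ne_top _ _), aux_exp_Iio hl ht,
    measure_univ]
  rw [← ENNReal.ofReal_one, ← ENNReal.ofReal_sub _ (by have := Real.exp_pos (-(l*t)); have : Real.exp (-(l*t)) ≤ 1 := Real.exp_le_one_iff.mpr (by nlinarith); linarith)]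
  norm_num

lemma aux_hasDeriv {l : ℝ} (hl : 0 < l) (x : ℝ) :
    HasDerivAt (fun x => -((x + 1/l) * Real.exp (-(l*x)))) (l * Real.exp (-(l*x)) * x) x := by
  have h1 : HasDerivAt (fun x : ℝ => x + 1/l) 1 x := (hasDerivAt_id x).add_const _
  have h2 : HasDerivAt (fun x : ℝ => -(l*x)) (-l) x := by
    simpa using ((hasDerivAt_id x).const_mul l).fun_neg
  have h3 := h2.exp
  have h4 := (h1.fun_mul h3).fun_neg
  refine h4.congr_deriv ?_
  field_simp
  ring

lemma aux_exp_weighted {l t : ℝ} (hl : 0 < l) (ht : 0 < t) :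
    ∫⁻ x in Iio t, ENNReal.ofReal x ∂(expMeasure l)
      = ENNReal.ofReal ((1 - Real.exp (-(l*t)))/l - t * Real.exp (-(l*t))) := by
  have hpdfm : Measurable (gammaPDF 1 l) := (measurable_gammaPDFReal 1 l).ennreal_ofReal
  rw [expMeasure, gammaMeasure, restrict_withDensity measurableSet_Iio,
    lintegral_withDensity_eq_lintegral_mul _ hpdfm ENNReal.measurable_ofReal]
  have hsplit : Iio t = Iio (0:ℝ) ∪ Ico 0 t := by
    ext x; simp only [Set.mem_Iio, Set.mem_union, Set.mem_Ico]
    constructor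
    · intro h; rcases lt_or_ge x 0 with h0 | h0
      · exact Or.inl h0
      · exact Or.inr ⟨h0, h⟩
    · rintro (h | ⟨_, h⟩)
      · linarith
      · exact h
  rw [hsplit, lintegral_union measurableSet_Ico (by
    refine Set.disjoint_left.2 fun x hx hx' => ?_
    exact absurd hx'.1 (not_le.2 hx))]
  have hz : ∫⁻ x in Iio (0:ℝ), (gammaPDF 1 l * fun x => ENNReal.ofReal x) x = 0 := by
    rw [setLIntegral_congr_fun measurableSet_Iio
      (fun x (hx : x < 0) =>
        show (gammaPDF 1 l * fun x => ENNReal.ofReal x) x = (fun _ => (0:ℝ≥0∞)) x from by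
          simp [Pi.mul_apply, gammaPDF_of_neg hx]), lintegral_zero]
  rw [hz, zero_add]
  have heq : ∫⁻ x in Ico (0:ℝ) t, (gammaPDF 1 l * fun x => ENNReal.ofReal x) x
      = ∫⁻ x in Ico (0:ℝ) t, ENNReal.ofReal (l * Real.exp (-(l*x)) * x) := by
    refine setLIntegral_congr_fun measurableSet_Ico (fun x hx => ?_)
    have h0 : (0:ℝ) ≤ x := hx.1
    have : gammaPDF 1 l x = ENNReal.ofReal (l * Real.exp (-(l*x))) := by
      rw [show gammaPDF 1 l x = exponentialPDF l x from rfl, exponentialPDF_of_nonneg h0]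
    rw [Pi.mul_apply, this, ← ENNReal.ofReal_mul (by positivity)]
  rw [heq]
  have hcont : Continuous (fun x : ℝ => l * Real.exp (-(l*x)) * x) := by
    continuity
  have hint : IntegrableOn (fun x : ℝ => l * Real.exp (-(l*x)) * x) (Ico 0 t) volume :=
    (hcont.integrableOn_Icc).mono_set Set.Ico_subset_Icc_self
  rw [← ofReal_integral_eq_lintegral_ofReal hint
    ((ae_restrict_iff' measurableSet_Ico).2 (ae_of_all _ fun x hx => by
      have := hx.1; positivity))]
  congr 1
  have h1 : ∫ x in Ico (0:ℝ) t, l * Real.exp (-(l*x)) * x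
      = ∫ x in (0:ℝ)..t, l * Real.exp (-(l*x)) * x := by
    rw [intervalIntegral.integral_of_le ht.le, integral_Ico_eq_integral_Ioo,
      integral_Ioc_eq_integral_Ioo]
  rw [h1, intervalIntegral.integral_eq_sub_of_hasDerivAt
    (fun x _ => aux_hasDeriv hl x) (hcont.intervalIntegrable 0 t)]
  simp only [mul_zero, neg_zero, Real.exp_zero, mul_one, zero_add]
  field_simp
  ring


noncomputable def chi (t : ℝ) (n i : ℕ) : ℝ → ℝ≥0∞ :=
  if i < n then (Set.Iio t).indicator 1 else (Set.Ici t).indicator 1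

lemma chi_meas (t : ℝ) (n i : ℕ) : Measurable (chi t n i) := by
  unfold chi; split_ifs
  exacts [measurable_const.indicator measurableSet_Iio,
    measurable_const.indicator measurableSet_Ici]

noncomputable def chiU (t : ℝ) (n k i : ℕ) : ℝ → ℝ≥0∞ :=
  if i = k then (Set.Iio t).indicator ENNReal.ofReal else chi t n i

lemma chiU_meas (t : ℝ) (n k i : ℕ) : Measurable (chiU t n k i) := by
  unfold chiU; split_ifs
  exacts [ENNReal.measurable_ofReal.indicator measurableSet_Iio, chi_meas t n i]

lemma prodA {Ω : Type*} (U : ℕ → Ω → ℝ) (t : ℝ) (n : ℕ) (ω : Ω) :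
    ({ω | (∀ i < n, U i ω < t) ∧ t ≤ U n ω} : Set Ω).indicator (fun _ => (1:ℝ≥0∞)) ω
      = ∏ i ∈ Finset.range (n+1), chi t n i (U i ω) := by
  by_cases hω : (∀ i < n, U i ω < t) ∧ t ≤ U n ω
  · rw [Set.indicator_of_mem (show ω ∈ {ω | (∀ i < n, U i ω < t) ∧ t ≤ U n ω} from hω)]
    refine (Finset.prod_eq_one fun i hi => ?_).symm
    rw [Finset.mem_range, Nat.lt_succ_iff] at hi
    unfold chi
    rcases lt_or_ge i n with h | h
    · rw [if_pos h]
      have : U i ω ∈ Set.Iio t := hω.1 i h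
      simp [this]
    · have hin : i = n := le_antisymm hi h
      subst hin
      rw [if_neg (lt_irrefl i)]
      have : U i ω ∈ Set.Ici t := hω.2
      simp [this]
  · rw [Set.indicator_of_notMem (show ω ∉ {ω | (∀ i < n, U i ω < t) ∧ t ≤ U n ω} from hω)]
    rw [not_and_or] at hω
    rcases hω with h | h
    · push_neg at h
      obtain ⟨i, hi, hti⟩ := h
      refine (Finset.prod_eq_zero (Finset.mem_range.2 (Nat.lt_succ_of_lt hi)) ?_).symm
      unfold chi
      rw [if_pos hi]
      have : U i ω ∉ Set.Iio t := by simpa using hti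
      simp [this]
    · push_neg at h
      refine (Finset.prod_eq_zero (Finset.self_mem_range_succ n) ?_).symm
      unfold chi
      rw [if_neg (lt_irrefl n)]
      have : U n ω ∉ Set.Ici t := by simpa using h
      simp [this]

lemma prodU {Ω : Type*} (U : ℕ → Ω → ℝ) (t : ℝ) (n k : ℕ) (hk : k < n) (ω : Ω) :
    ({ω | (∀ i < n, U i ω < t) ∧ t ≤ U n ω} : Set Ω).indicator (fun _ => (1:ℝ≥0∞)) ω
        * ENNReal.ofReal (U k ω)
      = ∏ i ∈ Finset.range (n+1), chiU t n k i (U i ω) := by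
  by_cases hω : (∀ i < n, U i ω < t) ∧ t ≤ U n ω
  · rw [Set.indicator_of_mem (show ω ∈ {ω | (∀ i < n, U i ω < t) ∧ t ≤ U n ω} from hω), one_mul]
    symm
    have hmain : chiU t n k k (U k ω) = ENNReal.ofReal (U k ω) := by
      unfold chiU; rw [if_pos rfl]
      have : U k ω ∈ Set.Iio t := hω.1 k hk
      simp [this]
    have hothers : ∀ i ∈ Finset.range (n+1), i ≠ k → chiU t n k i (U i ω) = 1 := by
      intro i hi hne
      rw [Finset.mem_range, Nat.lt_succ_iff] at hi
      unfold chiU chi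
      rw [if_neg hne]
      rcases lt_or_ge i n with h | h
      · rw [if_pos h]
        have : U i ω ∈ Set.Iio t := hω.1 i h
        simp [this]
      · have hin : i = n := le_antisymm hi h
        subst hin
        rw [if_neg (lt_irrefl i)]
        have : U i ω ∈ Set.Ici t := hω.2
        simp [this]
    rw [Finset.prod_eq_single_of_mem k (Finset.mem_range.2 (Nat.lt_succ_of_lt hk)) hothers,
      hmain]
  · rw [Set.indicator_of_notMem (show ω ∉ {ω | (∀ i < n, U i ω < t) ∧ t ≤ U n ω} from hω), zero_mul]
    rw [not_and_or] at hω
    rcases hω with h | h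
    · push_neg at h
      obtain ⟨i, hi, hti⟩ := h
      refine (Finset.prod_eq_zero (Finset.mem_range.2 (Nat.lt_succ_of_lt hi)) ?_).symm
      have hni : U i ω ∉ Set.Iio t := by simpa using hti
      unfold chiU chi
      split_ifs <;> simp [hni, hi]
    · push_neg at h
      refine (Finset.prod_eq_zero (Finset.self_mem_range_succ n) ?_).symm
      have hni : U n ω ∉ Set.Ici t := by simpa using h
      unfold chiU chi
      rw [if_neg (by omega), if_neg (lt_irrefl n)]
      simp [hni]
noncomputable def gA (t : ℝ) (n : ℕ) (e : ℕ × Fin 3) : ℝ → ℝ≥0∞ :=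
  if e.2 = 0 then chi t n e.1 else if e.2 = 1 then ENNReal.ofReal else 1

lemma gA_zero (t : ℝ) (n i : ℕ) : gA t n (i, 0) = chi t n i := rfl

lemma gA_one (t : ℝ) (n i : ℕ) : gA t n (i, 1) = ENNReal.ofReal := rfl

lemma gA_meas (t : ℝ) (n : ℕ) (e : ℕ × Fin 3) : Measurable (gA t n e) := by
  unfold gA; split_ifs
  exacts [chi_meas t n e.1, ENNReal.measurable_ofReal, measurable_const]

noncomputable def gU (t : ℝ) (n k : ℕ) (e : ℕ × Fin 3) : ℝ → ℝ≥0∞ :=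
  if e.2 = 0 then chiU t n k e.1 else 1

lemma gU_zero (t : ℝ) (n k i : ℕ) : gU t n k (i, 0) = chiU t n k i := rfl

lemma gU_meas (t : ℝ) (n k : ℕ) (e : ℕ × Fin 3) : Measurable (gU t n k e) := by
  unfold gU; split_ifs
  exacts [chiU_meas t n k e.1, measurable_const]

/-- (Indices shifted to start at `0`: `U 0` is `U₁`, etc.)
If each uptime `U_k` is exponentially distributed with rate `l > 0`, each downtime
has finite mean `E[D₁] = μ`, and each processing time is the constant `t > 0`, then
`E[R] = (1/l + μ)·(e^{l·t} - 1)`. -/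
theorem stmt11
    {Ω : Type*} [MeasurableSpace Ω] (P : Measure Ω) [IsProbabilityMeasure P]
    (U D p : ℕ → Ω → ℝ)
    (hUmeas : ∀ k, Measurable (U k)) (hDmeas : ∀ k, Measurable (D k))
    (hpmeas : ∀ k, Measurable (p k))
    (hUnn : ∀ k ω, 0 ≤ U k ω) (hDnn : ∀ k ω, 0 ≤ D k ω) (hpnn : ∀ k ω, 0 ≤ p k ω)
    (hindep : iIndepFun
      (fun i : ℕ × Fin 3 => ![U i.1, D i.1, p i.1] i.2) P)
    (hUid : ∀ k, IdentDistrib (U k) (U 0) P P)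
    (hDid : ∀ k, IdentDistrib (D k) (D 0) P P)
    (hpid : ∀ k, IdentDistrib (p k) (p 0) P P)
    (A : ℕ → Set Ω)
    (hA : ∀ n, A n = {ω | (∀ i < n, U i ω < p i ω) ∧ p n ω ≤ U n ω})
    (R : Ω → ℝ≥0∞)
    (hR : ∀ ω, R ω =
      (∑' n, Set.indicator (A n)
        (fun ω => ENNReal.ofReal (p n ω + ∑ k ∈ Finset.range n, (U k ω + D k ω))) ω)
      + Set.indicator (⋃ n, A n)ᶜ (fun _ => (⊤ : ℝ≥0∞)) ω)
    (l t : ℝ) (hl : 0 < l) (ht : 0 < t)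
    (hUexp : ∀ k, Measure.map (U k) P = expMeasure l)
    (hpt : ∀ k, p k = fun _ => t)
    (μ : ℝ) (hDint : Integrable (D 0) P) (hμ : μ = ∫ ω, D 0 ω ∂P) :
    ∫⁻ ω, R ω ∂P = ENNReal.ofReal ((1 / l + μ) * (Real.exp (l * t) - 1)) := by
  classical
  have hq0 : 0 < Real.exp (-(l*t)) := Real.exp_pos _
  set q : ℝ := Real.exp (-(l*t)) with hqdef
  have hq1 : q < 1 := by
    rw [hqdef]
    exact Real.exp_lt_one_iff.mpr (by nlinarith)
  set ρ : ℝ := 1 - q with hρdef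
  have hρ0 : 0 < ρ := by rw [hρdef]; linarith
  have hρ1 : ρ < 1 := by rw [hρdef]; linarith
  have hqe : q * Real.exp (l*t) = 1 := by
    rw [hqdef, ← Real.exp_add]; simp
  set aU : ℝ := ρ/l - t*q with haUdef
  have haU : 0 ≤ aU := by
    rw [haUdef, hρdef]
    have h1 := Real.add_one_le_exp (l*t)
    have key : 0 ≤ 1 - q - l*t*q := by nlinarith
    have h2 : (1-q)/l - t*q = (1 - q - l*t*q)/l := by field_simp
    rw [h2]
    positivity
  have hμ0 : 0 ≤ μ := hμ ▸ integral_nonneg (fun ω => hDnn 0 ω)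
  -- the independent family
  set f : ℕ × Fin 3 → Ω → ℝ := fun i => ![U i.1, D i.1, p i.1] i.2 with hfdef
  have hfU : ∀ i, f (i, 0) = U i := fun i => rfl
  have hfD : ∀ i, f (i, 1) = D i := fun i => rfl
  have hfm : ∀ e, Measurable (f e) := by
    rintro ⟨i, j⟩
    fin_cases j
    exacts [hUmeas i, hDmeas i, hpmeas i]
  have hprodint : ∀ (g : ℕ × Fin 3 → ℝ → ℝ≥0∞), (∀ e, Measurable (g e)) →
      ∀ s : Finset (ℕ × Fin 3),
      ∫⁻ ω, ∏ e ∈ s, g e (f e ω) ∂P = ∏ e ∈ s, ∫⁻ ω, g e (f e ω) ∂P := by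
    intro g hg s
    have h1 := hindep.comp g hg
    have h2 := aux_lintegral_prod (P := P) (Y := fun e => g e ∘ f e)
      (fun e => (hg e).comp (hfm e)) h1 s
    simpa [Function.comp] using h2
  -- single-coordinate integrals
  have hmap : ∀ (i : ℕ) (g : ℝ → ℝ≥0∞), Measurable g →
      ∫⁻ ω, g (U i ω) ∂P = ∫⁻ x, g x ∂(expMeasure l) := by
    intro i g hg
    rw [← hUexp i, lintegral_map hg (hUmeas i)]
  have hIlt : ∀ i : ℕ, ∫⁻ ω, (Set.Iio t).indicator 1 (U i ω) ∂P = ENNReal.ofReal ρ := by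
    intro i
    rw [hmap i ((Set.Iio t).indicator 1) (measurable_one.indicator measurableSet_Iio),
      lintegral_indicator_one measurableSet_Iio, aux_exp_Iio hl ht.le]
  have hIge : ∀ i : ℕ, ∫⁻ ω, (Set.Ici t).indicator 1 (U i ω) ∂P = ENNReal.ofReal q := by
    intro i
    rw [hmap i ((Set.Ici t).indicator 1) (measurable_one.indicator measurableSet_Ici),
      lintegral_indicator_one measurableSet_Ici, aux_exp_Ici hl ht.le]
  have hIw : ∀ i : ℕ, ∫⁻ ω, (Set.Iio t).indicator ENNReal.ofReal (U i ω) ∂P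
      = ENNReal.ofReal aU := by
    intro i
    rw [hmap i _ (ENNReal.measurable_ofReal.indicator measurableSet_Iio),
      lintegral_indicator measurableSet_Iio, aux_exp_weighted hl ht]
  have hID : ∀ k, ∫⁻ ω, ENNReal.ofReal (D k ω) ∂P = ENNReal.ofReal μ := by
    intro k
    have h1 : ∫⁻ ω, ENNReal.ofReal (D k ω) ∂P = ∫⁻ ω, ENNReal.ofReal (D 0 ω) ∂P :=
      ((hDid k).comp ENNReal.measurable_ofReal).lintegral_eq
    rw [h1, ← ofReal_integral_eq_lintegral_ofReal hDint (ae_of_all _ fun ω => hDnn 0 ω), hμ]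
  -- the sets A n
  have hAset : ∀ n, A n = {ω | (∀ i < n, U i ω < t) ∧ t ≤ U n ω} := by
    intro n; rw [hA n]; simp [hpt]
  have hAmeas : ∀ n, MeasurableSet (A n) := by
    intro n; rw [hAset n]
    have h1 : MeasurableSet {ω | t ≤ U n ω} := measurableSet_le measurable_const (hUmeas n)
    have h2 : MeasurableSet {ω | ∀ i < n, U i ω < t} := by
      have he : {ω | ∀ i < n, U i ω < t} = ⋂ i ∈ Set.Iio n, {ω | U i ω < t} := by
        ext ω; simp
      rw [he]
      exact MeasurableSet.biInter (Set.to_countable _)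
        (fun i _ => measurableSet_lt (hUmeas i) measurable_const)
    have : {ω | (∀ i < n, U i ω < t) ∧ t ≤ U n ω}
        = {ω | ∀ i < n, U i ω < t} ∩ {ω | t ≤ U n ω} := rfl
    rw [this]
    exact h2.inter h1
  set Sn : ℕ → Finset (ℕ × Fin 3) :=
    fun n => (Finset.range (n+1)).image (fun i => (i, (0 : Fin 3))) with hSndef
  have hprod_image : ∀ (n : ℕ) (F : ℕ × Fin 3 → ℝ≥0∞),
      ∏ e ∈ Sn n, F e = ∏ i ∈ Finset.range (n+1), F (i, 0) :=
    fun n F => Finset.prod_image (fun x _ y _ h => by simpa using congrArg Prod.fst h)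
  have hindA : ∀ n ω, (A n).indicator (fun _ => (1:ℝ≥0∞)) ω
      = ∏ e ∈ Sn n, gA t n e (f e ω) := by
    intro n ω
    rw [hprod_image n, hAset n]
    simpa [gA_zero, hfU] using prodA U t n ω
  have hSnval : ∀ n, ∏ e ∈ Sn n, ∫⁻ ω, gA t n e (f e ω) ∂P
      = (ENNReal.ofReal ρ)^n * ENNReal.ofReal q := by
    intro n
    rw [hprod_image n]
    simp only [gA_zero, hfU]
    rw [Finset.prod_range_succ]
    have h1 : ∀ i ∈ Finset.range n, ∫⁻ ω, chi t n i (U i ω) ∂P = ENNReal.ofReal ρ := by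
      intro i hi
      unfold chi
      rw [if_pos (Finset.mem_range.1 hi)]
      exact hIlt i
    rw [Finset.prod_congr rfl h1, Finset.prod_const, Finset.card_range]
    congr 1
    unfold chi
    rw [if_neg (lt_irrefl n)]
    exact hIge n
  have hPA : ∀ n, P (A n) = (ENNReal.ofReal ρ)^n * ENNReal.ofReal q := by
    intro n
    rw [← lintegral_indicator_one (hAmeas n)]
    have h0 : ∫⁻ ω, (A n).indicator 1 ω ∂P = ∫⁻ ω, ∏ e ∈ Sn n, gA t n e (f e ω) ∂P :=
      lintegral_congr (hindA n)
    rw [h0, hprodint _ (gA_meas t n) _, hSnval n]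
  have hJU : ∀ n k, k < n →
      ∫⁻ ω, (A n).indicator (fun _ => (1:ℝ≥0∞)) ω * ENNReal.ofReal (U k ω) ∂P
        = ENNReal.ofReal aU * (ENNReal.ofReal ρ)^(n-1) * ENNReal.ofReal q := by
    intro n k hk
    have hi : ∀ ω, (A n).indicator (fun _ => (1:ℝ≥0∞)) ω * ENNReal.ofReal (U k ω)
        = ∏ e ∈ Sn n, gU t n k e (f e ω) := by
      intro ω
      rw [hprod_image n, hAset n]
      simpa [gU_zero, hfU] using prodU U t n k hk ω
    rw [lintegral_congr hi, hprodint _ (gU_meas t n k) _, hprod_image n]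
    simp only [gU_zero, hfU]
    rw [Finset.prod_range_succ]
    have hlast : ∫⁻ ω, chiU t n k n (U n ω) ∂P = ENNReal.ofReal q := by
      unfold chiU
      rw [if_neg (by omega)]
      unfold chi
      rw [if_neg (lt_irrefl n)]
      exact hIge n
    have hmid : ∏ i ∈ Finset.range n, ∫⁻ ω, chiU t n k i (U i ω) ∂P
        = ENNReal.ofReal aU * (ENNReal.ofReal ρ)^(n-1) := by
      rw [← Finset.mul_prod_erase _ _ (Finset.mem_range.2 hk)]
      have hfirst : ∫⁻ ω, chiU t n k k (U k ω) ∂P = ENNReal.ofReal aU := by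
        unfold chiU
        rw [if_pos rfl]
        exact hIw k
      have hrest : ∀ i ∈ (Finset.range n).erase k,
          ∫⁻ ω, chiU t n k i (U i ω) ∂P = ENNReal.ofReal ρ := by
        intro i hi'
        have h1 := Finset.mem_of_mem_erase hi'
        have h2 := Finset.ne_of_mem_erase hi'
        unfold chiU
        rw [if_neg h2]
        unfold chi
        rw [if_pos (Finset.mem_range.1 h1)]
        exact hIlt i
      rw [hfirst, Finset.prod_congr rfl hrest, Finset.prod_const,
        Finset.card_erase_of_mem (Finset.mem_range.2 hk), Finset.card_range]
    rw [hlast, hmid]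
  have hJD : ∀ n k,
      ∫⁻ ω, (A n).indicator (fun _ => (1:ℝ≥0∞)) ω * ENNReal.ofReal (D k ω) ∂P
        = ENNReal.ofReal μ * ((ENNReal.ofReal ρ)^n * ENNReal.ofReal q) := by
    intro n k
    have hknm : (k, (1 : Fin 3)) ∉ Sn n := by
      rw [hSndef]
      simp [Finset.mem_image]
    have hi : ∀ ω, (A n).indicator (fun _ => (1:ℝ≥0∞)) ω * ENNReal.ofReal (D k ω)
        = ∏ e ∈ insert (k, (1 : Fin 3)) (Sn n), gA t n e (f e ω) := by
      intro ω
      rw [Finset.prod_insert hknm, ← hindA n ω, gA_one, hfD, mul_comm]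
    rw [lintegral_congr hi, hprodint _ (gA_meas t n) _, Finset.prod_insert hknm,
      hSnval n]
    congr 1
    rw [gA_one, hfD]
    exact hID k
  -- value of each term of the series
  set u : ℕ → ℝ := fun n => t*(ρ^n*q) + (n:ℝ)*(aU*ρ^(n-1)*q) + (n:ℝ)*(ρ^n*q*μ) with hudef
  have hun : ∀ n, 0 ≤ u n := by
    intro n
    rw [hudef]
    have h1 : (0:ℝ) ≤ (n:ℝ) := Nat.cast_nonneg n
    have := ht.le; have := hq0.le; have := hρ0.le
    positivity
  have hT : ∀ n, ∫⁻ ω, (A n).indicator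
      (fun ω => ENNReal.ofReal (p n ω + ∑ k ∈ Finset.range n, (U k ω + D k ω))) ω ∂P
      = ENNReal.ofReal (u n) := by
    intro n
    have hsplit : ∀ ω, (A n).indicator
        (fun ω => ENNReal.ofReal (p n ω + ∑ k ∈ Finset.range n, (U k ω + D k ω))) ω
        = (A n).indicator (fun _ => (1:ℝ≥0∞)) ω * ENNReal.ofReal t
          + ((∑ k ∈ Finset.range n, (A n).indicator (fun _ => (1:ℝ≥0∞)) ω * ENNReal.ofReal (U k ω))
          + (∑ k ∈ Finset.range n, (A n).indicator (fun _ => (1:ℝ≥0∞)) ω * ENNReal.ofReal (D k ω))) := by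
      intro ω
      by_cases hω : ω ∈ A n
      · rw [Set.indicator_of_mem hω, Set.indicator_of_mem hω]
        simp only [one_mul, hpt n]
        rw [ENNReal.ofReal_add ht.le (Finset.sum_nonneg fun k _ =>
          add_nonneg (hUnn k ω) (hDnn k ω))]
        congr 1
        rw [ENNReal.ofReal_sum_of_nonneg fun k _ => add_nonneg (hUnn k ω) (hDnn k ω)]
        rw [← Finset.sum_add_distrib]
        exact Finset.sum_congr rfl fun k _ => ENNReal.ofReal_add (hUnn k ω) (hDnn k ω)
      · rw [Set.indicator_of_notMem hω, Set.indicator_of_notMem hω]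
        simp
    rw [lintegral_congr hsplit]
    have m1 : Measurable fun ω => (A n).indicator (fun _ => (1:ℝ≥0∞)) ω * ENNReal.ofReal t :=
      (measurable_const.indicator (hAmeas n)).mul_const _
    have mU : ∀ k, Measurable fun ω =>
        (A n).indicator (fun _ => (1:ℝ≥0∞)) ω * ENNReal.ofReal (U k ω) :=
      fun k => (measurable_const.indicator (hAmeas n)).mul (hUmeas k).ennreal_ofReal
    have mD : ∀ k, Measurable fun ω =>
        (A n).indicator (fun _ => (1:ℝ≥0∞)) ω * ENNReal.ofReal (D k ω) :=
      fun k => (measurable_const.indicator (hAmeas n)).mul (hDmeas k).ennreal_ofReal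
    rw [lintegral_add_left m1, lintegral_add_left (by
      exact Finset.measurable_sum _ fun k _ => mU k)]
    rw [lintegral_finset_sum _ (fun k _ => mU k), lintegral_finset_sum _ (fun k _ => mD k)]
    have e1 : ∫⁻ ω, (A n).indicator (fun _ => (1:ℝ≥0∞)) ω * ENNReal.ofReal t ∂P
        = ((ENNReal.ofReal ρ)^n * ENNReal.ofReal q) * ENNReal.ofReal t := by
      rw [lintegral_mul_const _ (measurable_const.indicator (hAmeas n))]
      congr 1
      have : ∫⁻ ω, (A n).indicator (fun _ => (1:ℝ≥0∞)) ω ∂P = P (A n) :=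
        lintegral_indicator_one (hAmeas n)
      rw [this, hPA n]
    have e2 : ∑ k ∈ Finset.range n,
        ∫⁻ ω, (A n).indicator (fun _ => (1:ℝ≥0∞)) ω * ENNReal.ofReal (U k ω) ∂P
        = (n:ℝ≥0∞) * (ENNReal.ofReal aU * (ENNReal.ofReal ρ)^(n-1) * ENNReal.ofReal q) := by
      rw [Finset.sum_congr rfl fun k hk => hJU n k (Finset.mem_range.1 hk),
        Finset.sum_const, Finset.card_range, nsmul_eq_mul]
    have e3 : ∑ k ∈ Finset.range n,
        ∫⁻ ω, (A n).indicator (fun _ => (1:ℝ≥0∞)) ω * ENNReal.ofReal (D k ω) ∂P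
        = (n:ℝ≥0∞) * (ENNReal.ofReal μ * ((ENNReal.ofReal ρ)^n * ENNReal.ofReal q)) := by
      rw [Finset.sum_congr rfl fun k _ => hJD n k,
        Finset.sum_const, Finset.card_range, nsmul_eq_mul]
    rw [e1, e2, e3, hudef]
    have nn1 : (0:ℝ) ≤ t*(ρ^n*q) := mul_nonneg ht.le (mul_nonneg (pow_nonneg hρ0.le _) hq0.le)
    have nn2 : (0:ℝ) ≤ (n:ℝ)*(aU*ρ^(n-1)*q) := mul_nonneg (Nat.cast_nonneg n)
      (mul_nonneg (mul_nonneg haU (pow_nonneg hρ0.le _)) hq0.le)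
    have nn3 : (0:ℝ) ≤ (n:ℝ)*(ρ^n*q*μ) := mul_nonneg (Nat.cast_nonneg n)
      (mul_nonneg (mul_nonneg (pow_nonneg hρ0.le _) hq0.le) hμ0)
    have hx1 : ENNReal.ofReal (t*(ρ^n*q))
        = ENNReal.ofReal t * (ENNReal.ofReal ρ^n * ENNReal.ofReal q) := by
      rw [ENNReal.ofReal_mul ht.le,
        ENNReal.ofReal_mul (pow_nonneg hρ0.le _), ENNReal.ofReal_pow hρ0.le]
    have hx2 : ENNReal.ofReal ((n:ℝ)*(aU*ρ^(n-1)*q))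
        = (n:ℝ≥0∞) * (ENNReal.ofReal aU * ENNReal.ofReal ρ^(n-1) * ENNReal.ofReal q) := by
      rw [ENNReal.ofReal_mul (Nat.cast_nonneg n), ENNReal.ofReal_natCast,
        ENNReal.ofReal_mul (mul_nonneg haU (pow_nonneg hρ0.le _)),
        ENNReal.ofReal_mul haU, ENNReal.ofReal_pow hρ0.le]
    have hx3 : ENNReal.ofReal ((n:ℝ)*(ρ^n*q*μ))
        = (n:ℝ≥0∞) * (ENNReal.ofReal ρ^n * ENNReal.ofReal q * ENNReal.ofReal μ) := by
      rw [ENNReal.ofReal_mul (Nat.cast_nonneg n), ENNReal.ofReal_natCast,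
        ENNReal.ofReal_mul (mul_nonneg (pow_nonneg hρ0.le _) hq0.le),
        ENNReal.ofReal_mul (pow_nonneg hρ0.le _), ENNReal.ofReal_pow hρ0.le]
    rw [ENNReal.ofReal_add (add_nonneg nn1 nn2) nn3, ENNReal.ofReal_add nn1 nn2,
      hx1, hx2, hx3]
    ring
  -- the union has full measure
  have hdisj : Pairwise (Function.onFun Disjoint A) := by
    have key : ∀ m n, m < n → Disjoint (A m) (A n) := by
      intro m n hmn
      rw [Set.disjoint_left]
      intro ω hm hn
      rw [hAset m] at hm
      rw [hAset n] at hn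
      exact absurd (hn.1 m hmn) (not_lt.2 hm.2)
    intro m n hmn
    rcases hmn.lt_or_gt with h | h
    exacts [key m n h, (key n m h).symm]
  have hone : (1 : ℝ≥0∞) - ENNReal.ofReal ρ = ENNReal.ofReal q := by
    rw [← ENNReal.ofReal_one, ← ENNReal.ofReal_sub _ hρ0.le]
    congr 1
    rw [hρdef]; ring
  have hcompl : P ((⋃ n, A n)ᶜ) = 0 := by
    rw [measure_compl (MeasurableSet.iUnion hAmeas) (measure_ne_top P _)]
    have h1 : P (⋃ n, A n) = 1 := by
      rw [measure_iUnion hdisj hAmeas]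
      rw [tsum_congr hPA, ENNReal.tsum_mul_right, ENNReal.tsum_geometric, hone]
      exact ENNReal.inv_mul_cancel (by simpa using (ENNReal.ofReal_pos.mpr hq0).ne')
        ENNReal.ofReal_ne_top
    rw [h1]
    simp
  -- series summation
  have hnorm : ‖ρ‖ < 1 := by rw [Real.norm_eq_abs, abs_of_pos hρ0]; exact hρ1
  have hs1 : Summable (fun n : ℕ => ρ ^ n) := summable_geometric_of_lt_one hρ0.le hρ1
  have hs2 : Summable (fun n : ℕ => (n:ℝ) * ρ ^ n) := by
    have := summable_pow_mul_geometric_of_norm_lt_one (R := ℝ) 1 hnorm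
    simpa using this
  have hueq : u = fun n : ℕ => (t*q) * ρ^n + (aU*q/ρ + μ*q) * ((n:ℝ) * ρ^n) := by
    funext n
    rw [hudef]
    cases n with
    | zero => simp
    | succ m =>
      push_cast [pow_succ]
      field_simp
      ring
  have hsumu : Summable u := by
    rw [hueq]
    exact (hs1.mul_left _).add (hs2.mul_left _)
  have htsum : ∑' n, u n = (1/l + μ) * (Real.exp (l*t) - 1) := by
    rw [hueq, Summable.tsum_add (hs1.mul_left _) (hs2.mul_left _), tsum_mul_left, tsum_mul_left,
      tsum_geometric_of_lt_one hρ0.le hρ1, tsum_coe_mul_geometric_of_norm_lt_one hnorm]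
    have hexp : Real.exp (l*t) = q⁻¹ := by
      rw [hqdef, Real.exp_neg, inv_inv]
    have h1mρ : 1 - ρ = q := by rw [hρdef]; ring
    rw [hexp, h1mρ, haUdef]
    field_simp
    ring
  -- final assembly
  have hFnmeas : ∀ n, Measurable ((A n).indicator
      (fun ω => ENNReal.ofReal (p n ω + ∑ k ∈ Finset.range n, (U k ω + D k ω)))) :=
    fun n => (((hpmeas n).add (Finset.measurable_sum _ fun k _ =>
      (hUmeas k).add (hDmeas k))).ennreal_ofReal).indicator (hAmeas n)
  have hmeas_top : Measurable ((⋃ n, A n)ᶜ.indicator (fun _ => (⊤:ℝ≥0∞))) :=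
    measurable_const.indicator (MeasurableSet.iUnion hAmeas).compl
  rw [lintegral_congr hR, lintegral_add_right _ hmeas_top]
  have h2nd : ∫⁻ ω, (⋃ n, A n)ᶜ.indicator (fun _ => (⊤:ℝ≥0∞)) ω ∂P = 0 := by
    rw [lintegral_indicator (MeasurableSet.iUnion hAmeas).compl, setLIntegral_const,
      hcompl, mul_zero]
  rw [h2nd, add_zero, lintegral_tsum (fun n => (hFnmeas n).aemeasurable)]
  rw [tsum_congr hT, ← ENNReal.ofReal_tsum_of_nonneg hun hsumu, htsum]
end
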